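/- arXiv:2601.09409 — 9 statements merged into one kernel-verified Lean document; each statement's English description precedes it below -/
import Mathlib

section
/- Let S be a semiring and Σ an alphabet. A formal power series r : List Σ → S belongs to Rev(S,Σ) if and only if r is a finite sum of series from Rev₁(S,Σ), i.e., there exist k : ℕ and series r₁, …, r_k ∈ Rev₁(S,Σ) such that r = r₁ + … + r_k (pointwise sum, with the empty sum being the zero series). -/
open Matrix

namespace RevWA

/-- A weighted automaton over a semiring `S` and alphabet `α`, given by a linear
representation: number of states `n`, initial weight vector, transition matrices,
and final weight vector. -/
structure WA (S : Type) [Semiring S] (α : Type) where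
  n : ℕ
  init : Fin n → S
  trans : α → Matrix (Fin n) (Fin n) S
  final : Fin n → S

variable {S : Type} [Semiring S] {α : Type}

/-- The matrix associated to a word: product of the transition matrices of its letters. -/
def WA.matWord (A : WA S α) (w : List α) : Matrix (Fin A.n) (Fin A.n) S :=
  (w.map A.trans).prod

/-- The series realized by a weighted automaton: `i ⬝ μ(w) ⬝ f`. -/
def WA.series (A : WA S α) : List α → S :=
  fun w => A.init ⬝ᵥ (A.matWord w).mulVec A.final

/-- A matrix has at most one nonzero entry in each row. -/
def rowOk {n : ℕ} (M : Matrix (Fin n) (Fin n) S) : Prop :=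
  ∀ i j j', M i j ≠ 0 → M i j' ≠ 0 → j = j'

/-- A matrix has at most one nonzero entry in each column. -/
def colOk {n : ℕ} (M : Matrix (Fin n) (Fin n) S) : Prop :=
  ∀ i i' j, M i j ≠ 0 → M i' j ≠ 0 → i = i'

/-- A weighted automaton is reversible if each transition matrix has at most one
nonzero entry in each row and at most one nonzero entry in each column. -/
def WA.Reversible (A : WA S α) : Prop :=
  ∀ a : α, rowOk (A.trans a) ∧ colOk (A.trans a)

/-- A weighted automaton has exactly one initial state. -/
def WA.OneInitial (A : WA S α) : Prop :=
  ∃! q : Fin A.n, A.init q ≠ 0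

/-- `Rev S α`: series realized by reversible weighted automata over `S` and `α`. -/
def Rev (S : Type) [Semiring S] (α : Type) : Set (List α → S) :=
  {r | ∃ A : WA S α, A.Reversible ∧ A.series = r}

/-- `Rev₁ S α`: series realized by reversible weighted automata over `S` and `α`
with exactly one initial state. -/
def Rev1 (S : Type) [Semiring S] (α : Type) : Set (List α → S) :=
  {r | ∃ A : WA S α, A.Reversible ∧ A.OneInitial ∧ A.series = r}

/-- The support of a series. -/
def supp (r : List α → S) : Set (List α) :=
  {w | r w ≠ 0}

/-- `RevL S α`: supports of series realized by reversible weighted automata. -/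
def RevL (S : Type) [Semiring S] (α : Type) : Set (Set (List α)) :=
  {L | ∃ r ∈ Rev S α, supp r = L}

/-- `RevL₁ S α`: supports of series realized by reversible weighted automata with
exactly one initial state. -/
def RevL1 (S : Type) [Semiring S] (α : Type) : Set (Set (List α)) :=
  {L | ∃ r ∈ Rev1 S α, supp r = L}

/-- The characteristic series of a language `L` over `S`. -/
noncomputable def charSeries (S : Type) [Semiring S] {α : Type} (L : Set (List α)) :
    List α → S :=
  L.indicator 1

/-- A reversible nondeterministic finite automaton: deterministic and
codeterministic transition relation. -/
structure RevNFA (α : Type) where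
  Q : Type
  fintypeQ : Fintype Q
  δ : Q → α → Q → Prop
  I : Set Q
  F : Set Q
  det : ∀ p a q q', δ p a q → δ p a q' → q = q'
  codet : ∀ p p' a q, δ p a q → δ p' a q → p = p'

/-- Paths in a reversible NFA. -/
inductive RevNFA.Path {α : Type} (A : RevNFA α) : A.Q → List α → A.Q → Prop
  | nil (q : A.Q) : RevNFA.Path A q [] q
  | cons {p q r : A.Q} {a : α} {w : List α} :
      A.δ p a q → RevNFA.Path A q w r → RevNFA.Path A p (a :: w) r

/-- The language recognized by a reversible NFA. -/
def RevNFA.lang {α : Type} (A : RevNFA α) : Set (List α) :=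
  {w | ∃ p ∈ A.I, ∃ q ∈ A.F, A.Path p w q}

/-- A reversible NFA has exactly one initial state. -/
def RevNFA.OneInitial {α : Type} (A : RevNFA α) : Prop :=
  ∃ q : A.Q, A.I = {q}

/-- `RevL(𝔹,α)`: languages recognized by reversible NFAs. -/
def RevLB (α : Type) : Set (Set (List α)) :=
  {L | ∃ A : RevNFA α, A.lang = L}

/-- `RevL₁(𝔹,α)`: languages recognized by reversible NFAs with exactly one
initial state. -/
def RevL1B (α : Type) : Set (Set (List α)) :=
  {L | ∃ A : RevNFA α, A.OneInitial ∧ A.lang = L}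

end RevWA


section Aux
open Matrix RevWA

variable {S : Type} [Semiring S] {α : Type}

/-- generalized rowOk over any index type -/
def RowOk' {m : Type} (M : Matrix m m S) : Prop :=
  ∀ i j j', M i j ≠ 0 → M i j' ≠ 0 → j = j'

def ColOk' {m : Type} (M : Matrix m m S) : Prop :=
  ∀ i i' j, M i j ≠ 0 → M i' j ≠ 0 → i = i'

lemma rowOk'_fromBlocks {n₁ n₂ : Type} {A : Matrix n₁ n₁ S} {B : Matrix n₂ n₂ S}
    (hA : RowOk' A) (hB : RowOk' B) :
    RowOk' (Matrix.fromBlocks A 0 0 B) := by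
  rintro (i | i) (j | j) (j' | j') h h' <;>
    simp only [Matrix.fromBlocks_apply₁₁, Matrix.fromBlocks_apply₁₂,
      Matrix.fromBlocks_apply₂₁, Matrix.fromBlocks_apply₂₂, Matrix.zero_apply,
      ne_eq, not_true_eq_false] at h h' <;>
    first
      | exact absurd rfl h
      | exact absurd rfl h'
      | exact congrArg Sum.inl (hA i j j' h h')
      | exact congrArg Sum.inr (hB i j j' h h')

lemma colOk'_fromBlocks {n₁ n₂ : Type} {A : Matrix n₁ n₁ S} {B : Matrix n₂ n₂ S}
    (hA : ColOk' A) (hB : ColOk' B) :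
    ColOk' (Matrix.fromBlocks A 0 0 B) := by
  rintro (i | i) (i' | i') (j | j) h h' <;>
    simp only [Matrix.fromBlocks_apply₁₁, Matrix.fromBlocks_apply₁₂,
      Matrix.fromBlocks_apply₂₁, Matrix.fromBlocks_apply₂₂, Matrix.zero_apply,
      ne_eq, not_true_eq_false] at h h' <;>
    first
      | exact absurd rfl h
      | exact absurd rfl h'
      | exact congrArg Sum.inl (hA i i' j h h')
      | exact congrArg Sum.inr (hB i i' j h h')

lemma rowOk'_submatrix {m m' : Type} {M : Matrix m m S} (e : m' ≃ m)
    (hM : RowOk' M) : RowOk' (M.submatrix e e) := by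
  intro i j j' h h'
  exact e.injective (hM (e i) (e j) (e j') h h')

lemma colOk'_submatrix {m m' : Type} {M : Matrix m m S} (e : m' ≃ m)
    (hM : ColOk' M) : ColOk' (M.submatrix e e) := by
  intro i i' j h h'
  exact e.injective (hM (e i) (e i') (e j) h h')

/-- direct sum of two weighted automata -/
def sumWA (A B : WA S α) : WA S α where
  n := A.n + B.n
  init := Sum.elim A.init B.init ∘ finSumFinEquiv.symm
  trans a := (Matrix.fromBlocks (A.trans a) 0 0 (B.trans a)).submatrix
      finSumFinEquiv.symm finSumFinEquiv.symm
  final := Sum.elim A.final B.final ∘ finSumFinEquiv.symm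

lemma sumWA_matWord (A B : WA S α) (w : List α) :
    (sumWA A B).matWord w =
      (Matrix.fromBlocks (A.matWord w) 0 0 (B.matWord w)).submatrix
        finSumFinEquiv.symm finSumFinEquiv.symm := by
  induction w with
  | nil =>
    simp [WA.matWord, Matrix.fromBlocks_one, Matrix.submatrix_one_equiv]
    rfl
  | cons a w ih =>
    have hc : (sumWA A B).matWord (a :: w) = (sumWA A B).trans a * (sumWA A B).matWord w := rfl
    have h1 : A.matWord (a :: w) = A.trans a * A.matWord w := rfl
    have h2 : B.matWord (a :: w) = B.trans a * B.matWord w := rfl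
    rw [hc, ih, h1, h2]
    show (Matrix.fromBlocks (A.trans a) 0 0 (B.trans a)).submatrix
        finSumFinEquiv.symm finSumFinEquiv.symm *
        (Matrix.fromBlocks (A.matWord w) 0 0 (B.matWord w)).submatrix
        finSumFinEquiv.symm finSumFinEquiv.symm = _
    rw [Matrix.submatrix_mul_equiv, Matrix.fromBlocks_multiply]
    simp

lemma sumWA_series (A B : WA S α) :
    (sumWA A B).series = A.series + B.series := by
  funext w
  show (sumWA A B).init ⬝ᵥ ((sumWA A B).matWord w) *ᵥ (sumWA A B).final = _
  rw [sumWA_matWord]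
  show (Sum.elim A.init B.init ∘ finSumFinEquiv.symm) ⬝ᵥ
      ((Matrix.fromBlocks (A.matWord w) 0 0 (B.matWord w)).submatrix
        finSumFinEquiv.symm finSumFinEquiv.symm) *ᵥ
      (Sum.elim A.final B.final ∘ finSumFinEquiv.symm) = _
  rw [Matrix.submatrix_mulVec_equiv]
  rw [comp_equiv_dotProduct_comp_equiv]
  have : (Sum.elim A.final B.final ∘ finSumFinEquiv.symm) ∘
      finSumFinEquiv.symm.symm = Sum.elim A.final B.final := by
    funext x; simp
  rw [this, Matrix.fromBlocks_mulVec]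
  simp only [Matrix.zero_mulVec, add_zero, zero_add]
  rw [sumElim_dotProduct_sumElim]
  rfl

lemma sumWA_reversible {A B : WA S α} (hA : A.Reversible) (hB : B.Reversible) :
    (sumWA A B).Reversible := by
  intro a
  constructor
  · exact rowOk'_submatrix _ (rowOk'_fromBlocks (hA a).1 (hB a).1)
  · exact colOk'_submatrix _ (colOk'_fromBlocks (hA a).2 (hB a).2)

lemma zero_mem_rev : (0 : List α → S) ∈ Rev S α := by
  refine ⟨⟨0, Fin.elim0, fun _ => Matrix.of fun i _ => i.elim0, Fin.elim0⟩, ?_, ?_⟩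
  · intro a; exact ⟨fun i => i.elim0, fun i => i.elim0⟩
  · funext w
    show Fin.elim0 ⬝ᵥ _ = 0
    simp [dotProduct]

lemma rev_add {r s : List α → S} (hr : r ∈ Rev S α) (hs : s ∈ Rev S α) :
    r + s ∈ Rev S α := by
  obtain ⟨A, hA, rfl⟩ := hr
  obtain ⟨B, hB, rfl⟩ := hs
  exact ⟨sumWA A B, sumWA_reversible hA hB, sumWA_series A B⟩

lemma rev_sum {k : ℕ} {f : Fin k → (List α → S)} (hf : ∀ i, f i ∈ Rev S α) :
    (∑ i, f i) ∈ Rev S α := by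
  induction k with
  | zero => simpa using zero_mem_rev
  | succ k ih =>
    rw [Fin.sum_univ_succ]
    exact rev_add (hf 0) (ih fun i => hf i.succ)

end Aux


open RevWA in
theorem stmt0 (S : Type) [Semiring S] (α : Type) [Fintype α] [Nonempty α]
    (r : List α → S) :
    r ∈ Rev S α ↔
      ∃ (k : ℕ) (f : Fin k → (List α → S)),
        (∀ i : Fin k, f i ∈ Rev1 S α) ∧ r = ∑ i : Fin k, f i := by
  classical
  constructor
  · rintro ⟨A, hA, rfl⟩
    by_cases h10 : (1 : S) = 0
    · have hall : ∀ s : S, s = 0 := fun s => by rw [← mul_one s, h10, mul_zero]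
      refine ⟨0, Fin.elim0, fun i => i.elim0, ?_⟩
      funext w
      simp only [Finset.univ_eq_empty, Finset.sum_empty, Pi.zero_apply]
      exact hall _
    · refine ⟨A.n, fun q => if A.init q = 0 then 0 else
        (WA.mk A.n (Pi.single q (A.init q)) A.trans A.final).series, ?_, ?_⟩
      · intro q
        by_cases hq : A.init q = 0
        · simp only [hq, if_pos rfl]
          refine ⟨⟨1, fun _ => 1, fun _ => 0, fun _ => 0⟩, ?_, ?_, ?_⟩
          · intro a
            exact ⟨fun i j j' h _ => absurd rfl h, fun i i' j h _ => absurd rfl h⟩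
          · exact ⟨0, h10, fun p _ => Subsingleton.elim p 0⟩
          · funext w
            simp [WA.series, Matrix.mulVec, dotProduct]
        · simp only [if_neg hq]
          refine ⟨⟨A.n, Pi.single q (A.init q), A.trans, A.final⟩, hA, ?_, rfl⟩
          refine ⟨q, ?_, ?_⟩
          · simpa using hq
          · intro p hp
            by_contra hne
            exact hp (Pi.single_eq_of_ne hne _)
      · funext w
        rw [Finset.sum_apply]
        show A.init ⬝ᵥ (A.matWord w) *ᵥ A.final = _
        refine Finset.sum_congr rfl fun q _ => ?_
        by_cases hq : A.init q = 0
        · simp [hq]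
        · simp only [if_neg hq]
          exact (single_dotProduct _ _ _).symm
  · rintro ⟨k, f, hf, rfl⟩
    refine rev_sum fun i => ?_
    obtain ⟨A, h1, _, h3⟩ := hf i
    exact ⟨A, h1, h3⟩
end

section
/- Let S be a semiring and Σ an alphabet. The set Rev(S,Σ) is closed under pointwise addition and under left and right scalar multiplication: if r, s ∈ Rev(S,Σ) and α ∈ S, then the series r + s, w ↦ α · r(w), and w ↦ r(w) · α all belong to Rev(S,Σ). -/
open Matrix

namespace RevWA

variable {S : Type} [Semiring S] {α : Type}

/-- Direct sum of two weighted automata. -/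
noncomputable def WA.sum (A B : WA S α) : WA S α where
  n := A.n + B.n
  init := fun i => Sum.elim A.init B.init (finSumFinEquiv.symm i)
  trans := fun a =>
    (Matrix.fromBlocks (A.trans a) 0 0 (B.trans a)).submatrix
      finSumFinEquiv.symm finSumFinEquiv.symm
  final := fun i => Sum.elim A.final B.final (finSumFinEquiv.symm i)

lemma WA.sum_matWord (A B : WA S α) (w : List α) :
    (A.sum B).matWord w =
      (Matrix.fromBlocks (A.matWord w) 0 0 (B.matWord w)).submatrix
        finSumFinEquiv.symm finSumFinEquiv.symm := by
  induction w with
  | nil =>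
      simp [WA.matWord, Matrix.fromBlocks_one]
      rfl
  | cons a w ih =>
      rw [show (A.sum B).matWord (a :: w) = (A.sum B).trans a * (A.sum B).matWord w from rfl,
        ih, show (A.sum B).trans a = (Matrix.fromBlocks (A.trans a) 0 0 (B.trans a)).submatrix
          finSumFinEquiv.symm finSumFinEquiv.symm from rfl]
      change (_ : Matrix (Fin (A.n + B.n)) (Fin (A.n + B.n)) S) *
        (_ : Matrix (Fin (A.n + B.n)) (Fin (A.n + B.n)) S) = _
      rw [Matrix.submatrix_mul_equiv, Matrix.fromBlocks_multiply]
      simp [WA.matWord]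

lemma dot_submatrix (n₁ n₂ : ℕ) (u v : (Fin n₁ ⊕ Fin n₂) → S)
    (P : Matrix (Fin n₁ ⊕ Fin n₂) (Fin n₁ ⊕ Fin n₂) S) :
    (u ∘ ⇑finSumFinEquiv.symm) ⬝ᵥ
      (P.submatrix ⇑finSumFinEquiv.symm ⇑finSumFinEquiv.symm) *ᵥ
      (v ∘ ⇑finSumFinEquiv.symm) = u ⬝ᵥ P *ᵥ v := by
  simp only [Matrix.mulVec, dotProduct, Matrix.submatrix_apply, Function.comp_apply]
  rw [← Equiv.sum_comp finSumFinEquiv.symm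
    (fun s => u s * ∑ t, P s t * v t)]
  congr 1; funext i; congr 1
  rw [← Equiv.sum_comp finSumFinEquiv.symm (fun t => P (finSumFinEquiv.symm i) t * v t)]

lemma block_dot (n₁ n₂ : ℕ) (i₁ f₁ : Fin n₁ → S) (i₂ f₂ : Fin n₂ → S)
    (M : Matrix (Fin n₁) (Fin n₁) S) (N : Matrix (Fin n₂) (Fin n₂) S) :
    (Sum.elim i₁ i₂ ∘ ⇑finSumFinEquiv.symm) ⬝ᵥ
      ((Matrix.fromBlocks M 0 0 N).submatrix ⇑finSumFinEquiv.symm ⇑finSumFinEquiv.symm) *ᵥ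
      (Sum.elim f₁ f₂ ∘ ⇑finSumFinEquiv.symm) =
      i₁ ⬝ᵥ M *ᵥ f₁ + i₂ ⬝ᵥ N *ᵥ f₂ := by
  rw [dot_submatrix, Matrix.fromBlocks_mulVec]
  simp [sumElim_dotProduct_sumElim]

lemma WA.sum_series (A B : WA S α) : (A.sum B).series = A.series + B.series := by
  funext w
  simp only [WA.series, WA.sum_matWord, Pi.add_apply]
  exact block_dot A.n B.n A.init A.final B.init B.final (A.matWord w) (B.matWord w)

lemma WA.sum_reversible {A B : WA S α} (hA : A.Reversible) (hB : B.Reversible) :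
    (A.sum B).Reversible := by
  intro a
  obtain ⟨hAr, hAc⟩ := hA a
  obtain ⟨hBr, hBc⟩ := hB a
  constructor
  · intro i j j' h1 h2
    apply finSumFinEquiv.symm.injective
    revert h1 h2
    show Matrix.fromBlocks _ _ _ _ (finSumFinEquiv.symm i) (finSumFinEquiv.symm j) ≠ 0 →
      Matrix.fromBlocks _ _ _ _ (finSumFinEquiv.symm i) (finSumFinEquiv.symm j') ≠ 0 →
      finSumFinEquiv.symm j = finSumFinEquiv.symm j'
    rcases finSumFinEquiv.symm i with p | p <;>
      rcases finSumFinEquiv.symm j with q | q <;>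
      rcases finSumFinEquiv.symm j' with q' | q' <;>
      simp_all <;> intro h1 h2 <;> first
        | exact hAr p q q' h1 h2
        | exact hBr p q q' h1 h2
  · intro i i' j h1 h2
    apply finSumFinEquiv.symm.injective
    revert h1 h2
    show Matrix.fromBlocks _ _ _ _ (finSumFinEquiv.symm i) (finSumFinEquiv.symm j) ≠ 0 →
      Matrix.fromBlocks _ _ _ _ (finSumFinEquiv.symm i') (finSumFinEquiv.symm j) ≠ 0 →
      finSumFinEquiv.symm i = finSumFinEquiv.symm i'
    rcases finSumFinEquiv.symm i with p | p <;>
      rcases finSumFinEquiv.symm i' with p' | p' <;>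
      rcases finSumFinEquiv.symm j with q | q <;>
      simp_all <;> intro h1 h2 <;> first
        | exact hAc p p' q h1 h2
        | exact hBc p p' q h1 h2

/-- Scale the initial vector on the left. -/
def WA.lsmul (a : S) (A : WA S α) : WA S α :=
  { A with init := fun q => a * A.init q }

/-- Scale the final vector on the right. -/
def WA.rsmul (A : WA S α) (a : S) : WA S α :=
  { A with final := fun q => A.final q * a }

lemma WA.lsmul_series (a : S) (A : WA S α) :
    (WA.lsmul a A).series = fun w => a * A.series w := by
  funext w
  simp only [WA.series, WA.lsmul, WA.matWord, dotProduct, Finset.mul_sum, mul_assoc]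
  rfl

lemma WA.rsmul_series (a : S) (A : WA S α) :
    (WA.rsmul A a).series = fun w => A.series w * a := by
  funext w
  simp only [WA.series, WA.rsmul, WA.matWord, dotProduct, Matrix.mulVec,
    Finset.sum_mul, Finset.mul_sum, mul_assoc]
  rfl

end RevWA


open RevWA in
theorem stmt1 (S : Type) [Semiring S] (α : Type) [Fintype α] [Nonempty α]
    (r s : List α → S) (a : S) (hr : r ∈ Rev S α) (hs : s ∈ Rev S α) :
    r + s ∈ Rev S α ∧
      (fun w => a * r w) ∈ Rev S α ∧
      (fun w => r w * a) ∈ Rev S α := by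
  obtain ⟨A, hA, hAs⟩ := hr
  obtain ⟨B, hB, hBs⟩ := hs
  refine ⟨⟨A.sum B, WA.sum_reversible hA hB, ?_⟩,
    ⟨WA.lsmul a A, hA, ?_⟩, ⟨WA.rsmul A a, hA, ?_⟩⟩
  · rw [WA.sum_series, hAs, hBs]
  · rw [WA.lsmul_series, hAs]
  · rw [WA.rsmul_series, hAs]
end

section
/- Let S be a nontrivial semiring (i.e., (0 : S) ≠ 1), Σ an alphabet, and L a language recognized by a reversible NFA over Σ with exactly one initial state. Then the characteristic series 𝟙_L of L over S belongs to Rev₁(S,Σ); consequently L = supp(𝟙_L) is the support of a series in Rev₁(S,Σ). -/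
open Matrix

section Aux

open RevWA

lemma revnfa_path_det {α : Type} (A : RevNFA α) :
    ∀ {w : List α} {p q q' : A.Q}, A.Path p w q → A.Path p w q' → q = q' := by
  intro w
  induction w with
  | nil => intro p q q' h h'; cases h; cases h'; rfl
  | cons a w ih =>
    intro p q q' h h'
    cases h with
    | cons hd ht =>
      cases h' with
      | cons hd' ht' =>
        have := A.det _ _ _ _ hd hd'
        subst this
        exact ih ht ht'

lemma revnfa_path_cons_iff {α : Type} (A : RevNFA α) (p : A.Q) (a : α) (w : List α) (q : A.Q) :
    A.Path p (a :: w) q ↔ ∃ x, A.δ p a x ∧ A.Path x w q := by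
  constructor
  · intro h; cases h with | cons hd ht => exact ⟨_, hd, ht⟩
  · rintro ⟨x, hd, ht⟩; exact RevNFA.Path.cons hd ht

open Classical in
noncomputable def revnfaToWA (S : Type) [Semiring S] {α : Type} (A : RevNFA α) : WA S α :=
  letI := A.fintypeQ
  { n := Fintype.card A.Q
    init := fun p => if (Fintype.equivFin A.Q).symm p ∈ A.I then 1 else 0
    trans := fun a p q =>
      if A.δ ((Fintype.equivFin A.Q).symm p) a ((Fintype.equivFin A.Q).symm q) then 1 else 0
    final := fun q => if (Fintype.equivFin A.Q).symm q ∈ A.F then 1 else 0 }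

open Classical in
lemma revnfa_toWA_matWord (S : Type) [Semiring S] {α : Type} (A : RevNFA α) (w : List α) :
    letI := A.fintypeQ
    ∀ p q : A.Q,
      (revnfaToWA S A).matWord w ((Fintype.equivFin A.Q) p) ((Fintype.equivFin A.Q) q)
        = if A.Path p w q then 1 else 0 := by
  letI := A.fintypeQ
  set e := Fintype.equivFin A.Q with he
  induction w with
  | nil =>
    intro p q
    simp only [WA.matWord, List.map_nil, List.prod_nil]
    show (if e p = e q then (1:S) else 0) = _
    by_cases h : p = q
    · subst h; simp [RevNFA.Path.nil]
    · rw [if_neg (by simp [h]), if_neg (by intro hp; cases hp; exact h rfl)]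
  | cons a w ih =>
    intro p q
    have hmw : (revnfaToWA S A).matWord (a :: w) = (revnfaToWA S A).trans a * (revnfaToWA S A).matWord w := by
      simp [WA.matWord]
    rw [hmw]
    show ∑ j : Fin (revnfaToWA S A).n,
          (revnfaToWA S A).trans a (e p) j * (revnfaToWA S A).matWord w j (e q) = _
    have hsum : ∑ j : Fin (revnfaToWA S A).n,
          (revnfaToWA S A).trans a (e p) j * (revnfaToWA S A).matWord w j (e q)
        = ∑ x : A.Q, (revnfaToWA S A).trans a (e p) (e x) * (revnfaToWA S A).matWord w (e x) (e q) :=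
      (Equiv.sum_comp e fun k => (revnfaToWA S A).trans a (e p) k * (revnfaToWA S A).matWord w k (e q)).symm
    rw [hsum]
    have hterm : ∀ x : A.Q,
        (revnfaToWA S A).trans a (e p) (e x) * (revnfaToWA S A).matWord w (e x) (e q)
          = (if A.δ p a x then 1 else 0) * (if A.Path x w q then 1 else 0) := by
      intro x
      rw [ih x q]
      simp [revnfaToWA, he]
    simp only [hterm]
    by_cases h : ∃ x, A.δ p a x ∧ A.Path x w q
    · obtain ⟨x0, hd, hp⟩ := h
      rw [if_pos (RevNFA.Path.cons hd hp)]
      rw [Finset.sum_eq_single x0]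
      · simp [hd, hp]
      · intro b _ hb
        rw [if_neg (fun hdb => hb (A.det _ _ _ _ hdb hd)), zero_mul]
      · intro hx; exact absurd (Finset.mem_univ x0) hx
    · rw [if_neg (by rw [revnfa_path_cons_iff]; exact h)]
      apply Finset.sum_eq_zero
      intro x _
      by_cases hdx : A.δ p a x
      · rw [if_neg (fun hp => h ⟨x, hdx, hp⟩), mul_zero]
      · rw [if_neg hdx, zero_mul]

open Classical in
lemma revnfaToWA_init (S : Type) [Semiring S] {α : Type} (A : RevNFA α) :
    letI := A.fintypeQ
    ∀ p : Fin (Fintype.card A.Q),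
      (revnfaToWA S A).init p = if (Fintype.equivFin A.Q).symm p ∈ A.I then 1 else 0 :=
  fun _ => rfl

open Classical in
lemma revnfaToWA_final (S : Type) [Semiring S] {α : Type} (A : RevNFA α) :
    letI := A.fintypeQ
    ∀ p : Fin (Fintype.card A.Q),
      (revnfaToWA S A).final p = if (Fintype.equivFin A.Q).symm p ∈ A.F then 1 else 0 :=
  fun _ => rfl

open Classical in
lemma revnfaToWA_trans (S : Type) [Semiring S] {α : Type} (A : RevNFA α) :
    letI := A.fintypeQ
    ∀ (a : α) (p q : Fin (Fintype.card A.Q)),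
      (revnfaToWA S A).trans a p q
        = if A.δ ((Fintype.equivFin A.Q).symm p) a ((Fintype.equivFin A.Q).symm q) then 1 else 0 :=
  fun _ _ _ => rfl

end Aux

open RevWA in
theorem stmt2 (S : Type) [Semiring S] (hS : (0 : S) ≠ 1)
    (α : Type) [Fintype α] [Nonempty α]
    (L : Set (List α)) (hL : L ∈ RevL1B α) :
    charSeries S L ∈ Rev1 S α ∧ supp (charSeries S L) = L ∧ L ∈ RevL1 S α := by
  classical
  obtain ⟨A, ⟨q0, hI⟩, hlang⟩ := hL
  letI := A.fintypeQ
  set e := Fintype.equivFin A.Q with he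
  have h10 : (1 : S) ≠ 0 := fun h => hS h.symm
  set W := revnfaToWA S A with hW
  -- the series realized by W is the characteristic series
  have hseries : W.series = charSeries S L := by
    funext w
    have h1 : W.series w = ∑ x : A.Q, W.init (e x) * ((W.matWord w).mulVec W.final (e x)) := by
      rw [WA.series, dotProduct]
      exact (Equiv.sum_comp e fun k => W.init k * (W.matWord w).mulVec W.final k).symm
    have h2 : ∀ x : A.Q, (W.matWord w).mulVec W.final (e x)
        = ∑ y : A.Q, (if A.Path x w y then (1 : S) else 0) * (if y ∈ A.F then 1 else 0) := by
      intro x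
      have e1 : (W.matWord w).mulVec W.final (e x)
          = ∑ y : A.Q, W.matWord w (e x) (e y) * W.final (e y) := by
        show (∑ k, W.matWord w (e x) k * W.final k) = _
        exact (Equiv.sum_comp e fun k => W.matWord w (e x) k * W.final k).symm
      rw [e1]
      refine Finset.sum_congr rfl fun y _ => ?_
      rw [revnfa_toWA_matWord S A w x y]
      congr 1
      have hfin : W.final (e y) = if e.symm (e y) ∈ A.F then (1:S) else 0 :=
        revnfaToWA_final S A (e y)
      rw [hfin, Equiv.symm_apply_apply]
    have h3 : ∀ x : A.Q, W.init (e x) = if x = q0 then (1 : S) else 0 := by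
      intro x
      have hin : W.init (e x) = if e.symm (e x) ∈ A.I then (1:S) else 0 :=
        revnfaToWA_init S A (e x)
      rw [hin, Equiv.symm_apply_apply, hI]
      simp only [Set.mem_singleton_iff]
    rw [h1]
    simp only [h2, h3]
    rw [Finset.sum_eq_single q0]
    · rw [if_pos rfl, one_mul]
      have hmem : w ∈ L ↔ ∃ y, A.Path q0 w y ∧ y ∈ A.F := by
        rw [← hlang]
        constructor
        · rintro ⟨p, hp, q, hq, hpath⟩
          rw [hI, Set.mem_singleton_iff] at hp
          subst hp
          exact ⟨q, hpath, hq⟩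
        · rintro ⟨y, hpath, hy⟩
          exact ⟨q0, by rw [hI]; rfl, y, hy, hpath⟩
      by_cases hw : ∃ y, A.Path q0 w y ∧ y ∈ A.F
      · obtain ⟨y0, hp0, hf0⟩ := hw
        rw [Finset.sum_eq_single y0]
        · have : w ∈ L := hmem.2 ⟨y0, hp0, hf0⟩
          simp [hp0, hf0, charSeries, Set.indicator_apply, this]
        · intro b _ hb
          rw [if_neg (fun hpb => hb (revnfa_path_det A hpb hp0)), zero_mul]
        · intro hx; exact absurd (Finset.mem_univ y0) hx
      · have hwL : w ∉ L := fun h => hw (hmem.1 h)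
        rw [Finset.sum_eq_zero]
        · simp [charSeries, Set.indicator_apply, hwL]
        · intro y _
          by_cases hp : A.Path q0 w y
          · rw [if_neg (fun hf => hw ⟨y, hp, hf⟩), mul_zero]
          · rw [if_neg hp, zero_mul]
    · intro b _ hb
      rw [if_neg hb, zero_mul]
    · intro hx; exact absurd (Finset.mem_univ q0) hx
  -- W is reversible
  have hrev : W.Reversible := by
    intro a
    constructor
    · intro i j j' hij hij'
      have ht1 : W.trans a i j = if A.δ (e.symm i) a (e.symm j) then (1:S) else 0 :=
        revnfaToWA_trans S A a i j
      have ht2 : W.trans a i j' = if A.δ (e.symm i) a (e.symm j') then (1:S) else 0 :=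
        revnfaToWA_trans S A a i j'
      have d1 : A.δ (e.symm i) a (e.symm j) := by
        by_contra hc; exact hij (by rw [ht1, if_neg hc])
      have d2 : A.δ (e.symm i) a (e.symm j') := by
        by_contra hc; exact hij' (by rw [ht2, if_neg hc])
      exact e.symm.injective (A.det _ _ _ _ d1 d2)
    · intro i i' j hij hij'
      have ht1 : W.trans a i j = if A.δ (e.symm i) a (e.symm j) then (1:S) else 0 :=
        revnfaToWA_trans S A a i j
      have ht2 : W.trans a i' j = if A.δ (e.symm i') a (e.symm j) then (1:S) else 0 :=
        revnfaToWA_trans S A a i' j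
      have d1 : A.δ (e.symm i) a (e.symm j) := by
        by_contra hc; exact hij (by rw [ht1, if_neg hc])
      have d2 : A.δ (e.symm i') a (e.symm j) := by
        by_contra hc; exact hij' (by rw [ht2, if_neg hc])
      exact e.symm.injective (A.codet _ _ _ _ d1 d2)
  -- W has exactly one initial state
  have hone : W.OneInitial := by
    refine ⟨e q0, ?_, ?_⟩
    · show W.init (e q0) ≠ 0
      have h : W.init (e q0) = 1 := by
        have hin : W.init (e q0) = if e.symm (e q0) ∈ A.I then (1:S) else 0 :=
          revnfaToWA_init S A (e q0)
        rw [hin, Equiv.symm_apply_apply, hI]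
        exact if_pos rfl
      rw [h]; exact h10
    · intro y hy
      have hmem : e.symm y ∈ A.I := by
        by_contra hc
        have hin : W.init y = if e.symm y ∈ A.I then (1:S) else 0 := revnfaToWA_init S A y
        exact hy (by rw [hin, if_neg hc])
      rw [hI, Set.mem_singleton_iff] at hmem
      rw [← hmem]; exact (e.apply_symm_apply y).symm
  have hRev1 : charSeries S L ∈ Rev1 S α := ⟨W, hrev, hone, hseries⟩
  have hsupp : supp (charSeries S L) = L := by
    ext w
    by_cases hw : w ∈ L
    · simp [supp, charSeries, Set.indicator_apply, hw, h10]
    · simp [supp, charSeries, Set.indicator_apply, hw]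
  exact ⟨hRev1, hsupp, charSeries S L, hRev1, hsupp⟩
end

section
/- Let Σ be an alphabet and A a reversible weighted automaton over the field ZMod 2 and Σ with exactly one initial state. Then there exists a language L ⊆ List Σ recognized by a reversible NFA over Σ with exactly one initial state such that ‖A‖ is the characteristic series 𝟙_L of L over ZMod 2. -/
open Matrix

section Aux

open RevWA

lemma zmod2_eq_one {x : ZMod 2} (h : x ≠ 0) : x = 1 := by revert h; revert x; decide

lemma rowOk_one {n : ℕ} : rowOk (1 : Matrix (Fin n) (Fin n) (ZMod 2)) := by
  intro i j j' h h'
  simp [Matrix.one_apply] at h h'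
  omega

lemma rowOk_mul {n : ℕ} {M N : Matrix (Fin n) (Fin n) (ZMod 2)}
    (hM : rowOk M) (hN : rowOk N) : rowOk (M * N) := by
  intro i j j' h h'
  rw [Matrix.mul_apply] at h h'
  obtain ⟨k, -, hk⟩ := Finset.exists_ne_zero_of_sum_ne_zero h
  obtain ⟨k', -, hk'⟩ := Finset.exists_ne_zero_of_sum_ne_zero h'
  rw [mul_ne_zero_iff] at hk hk'
  have : k = k' := hM i k k' hk.1 hk'.1
  subst this
  exact hN k j j' hk.2 hk'.2

lemma matWord_rowOk {α : Type} (A : WA (ZMod 2) α) (hrev : A.Reversible) (w : List α) :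
    rowOk (A.matWord w) := by
  induction w with
  | nil => exact rowOk_one
  | cons a w ih =>
    have : A.matWord (a :: w) = A.trans a * A.matWord w := by
      simp [WA.matWord]
    rw [this]
    exact rowOk_mul (hrev a).1 ih

lemma path_nil_inv {α : Type} {B : RevNFA α} {p r : B.Q} (h : B.Path p [] r) : p = r := by
  cases h; rfl

lemma path_cons_inv {α : Type} {B : RevNFA α} {p r : B.Q} {a : α} {w : List α}
    (h : B.Path p (a :: w) r) : ∃ q, B.δ p a q ∧ B.Path q w r := by
  cases h with
  | cons hd hp => exact ⟨_, hd, hp⟩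

/-- The reversible NFA built from a reversible WA over `ZMod 2`. -/
def toNFA {α : Type} (A : WA (ZMod 2) α) (hrev : A.Reversible) (q0 : Fin A.n) :
    RevNFA α where
  Q := Fin A.n
  fintypeQ := inferInstance
  δ p a q := A.trans a p q ≠ 0
  I := {q0}
  F := {p | A.final p ≠ 0}
  det p a q q' h h' := (hrev a).1 p q q' h h'
  codet p p' a q h h' := (hrev a).2 p p' q h h'

instance {α : Type} (A : WA (ZMod 2) α) (hrev : A.Reversible) (q0 : Fin A.n) :
    Fintype (toNFA A hrev q0).Q := inferInstanceAs (Fintype (Fin A.n))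

lemma entry_iff_path {α : Type} (A : WA (ZMod 2) α) (hrev : A.Reversible) (q0 : Fin A.n)
    (w : List α) (p r : Fin A.n) :
    A.matWord w p r ≠ 0 ↔ (toNFA A hrev q0).Path p w r := by
  induction w generalizing p with
  | nil =>
    simp only [WA.matWord, List.map_nil, List.prod_nil, Matrix.one_apply]
    constructor
    · intro h
      have : p = r := by by_contra hc; simp [hc] at h
      subst this
      exact RevNFA.Path.nil (A := toNFA A hrev q0) p
    · intro h
      obtain rfl := path_nil_inv h
      simp
  | cons a w ih =>
    have hmw : A.matWord (a :: w) = A.trans a * A.matWord w := by simp [WA.matWord]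
    rw [hmw, Matrix.mul_apply]
    constructor
    · intro h
      obtain ⟨k, -, hk⟩ := Finset.exists_ne_zero_of_sum_ne_zero h
      rw [mul_ne_zero_iff] at hk
      exact RevNFA.Path.cons hk.1 ((ih k).mp hk.2)
    · intro h
      obtain ⟨q, hd, hp⟩ := path_cons_inv h
      have hq : A.matWord w q r ≠ 0 := (ih q).mpr hp
      have : ∑ k, A.trans a p k * A.matWord w k r = A.trans a p q * A.matWord w q r := by
        apply Finset.sum_eq_single
        · intro k _ hk
          have : A.trans a p k = 0 := by
            by_contra hc
            exact hk ((hrev a).1 p k q hc hd)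
          simp [this]
        · intro hmem; exact absurd (Finset.mem_univ q) hmem
      rw [this]
      exact mul_ne_zero hd hq

end Aux

open RevWA in
theorem stmt3 (α : Type) [Fintype α] [Nonempty α]
    (A : WA (ZMod 2) α) (hrev : A.Reversible) (hone : A.OneInitial) :
    ∃ L ∈ RevL1B α, A.series = charSeries (ZMod 2) L := by
  obtain ⟨q0, hq0, huniq⟩ := hone
  -- simplified formula for the series
  have hseries : ∀ w, A.series w = ∑ p, A.matWord w q0 p * A.final p := by
    intro w
    unfold WA.series
    rw [dotProduct]
    have : ∑ q, A.init q * (A.matWord w).mulVec A.final q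
        = A.init q0 * (A.matWord w).mulVec A.final q0 := by
      apply Finset.sum_eq_single
      · intro q _ hq
        have : A.init q = 0 := by
          by_contra hc
          exact hq (huniq q hc)
        simp [this]
      · intro hmem; exact absurd (Finset.mem_univ q0) hmem
    rw [this, zmod2_eq_one hq0, one_mul, Matrix.mulVec, dotProduct]
  have hkey : ∀ w, A.series w ≠ 0 ↔ ∃ p, A.matWord w q0 p ≠ 0 ∧ A.final p ≠ 0 := by
    intro w
    rw [hseries]
    constructor
    · intro h
      obtain ⟨p, -, hp⟩ := Finset.exists_ne_zero_of_sum_ne_zero h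
      exact ⟨p, mul_ne_zero_iff.mp hp⟩
    · rintro ⟨p, hp1, hp2⟩
      have : ∑ q, A.matWord w q0 q * A.final q = A.matWord w q0 p * A.final p := by
        apply Finset.sum_eq_single
        · intro q _ hq
          have : A.matWord w q0 q = 0 := by
            by_contra hc
            exact hq (matWord_rowOk A hrev w q0 q p hc hp1)
          simp [this]
        · intro hmem; exact absurd (Finset.mem_univ p) hmem
      rw [this]
      exact mul_ne_zero hp1 hp2
  refine ⟨supp A.series, ⟨toNFA A hrev q0, ⟨q0, rfl⟩, ?_⟩, ?_⟩
  · ext w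
    simp only [RevNFA.lang, Set.mem_setOf_eq, supp]
    constructor
    · rintro ⟨p, hp, q, hq, hpath⟩
      have hp' : p = q0 := hp
      rw [hp'] at hpath
      exact (hkey w).mpr ⟨q, (entry_iff_path A hrev q0 w q0 q).mpr hpath, hq⟩
    · intro h
      obtain ⟨p, h1, h2⟩ := (hkey w).mp h
      exact ⟨q0, rfl, p, h2, (entry_iff_path A hrev q0 w q0 p).mp h1⟩
  · funext w
    simp only [charSeries, supp]
    by_cases h : A.series w = 0
    · rw [Set.indicator_of_notMem (show w ∉ {w | A.series w ≠ 0} from fun hc => hc h)]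
      exact h
    · rw [Set.indicator_of_mem (show w ∈ {w | A.series w ≠ 0} from h)]
      exact zmod2_eq_one h
end

section
/- Let Σ be an alphabet and let L and K be languages over Σ each recognized by a reversible NFA with exactly one initial state. Then the intersection L ∩ K is also recognized by a reversible NFA with exactly one initial state. -/
open Matrix

namespace RevWA

def prodNFA {α : Type} (A B : RevNFA α) : RevNFA α where
  Q := A.Q × B.Q
  fintypeQ := @instFintypeProd _ _ A.fintypeQ B.fintypeQ
  δ := fun p a q => A.δ p.1 a q.1 ∧ B.δ p.2 a q.2
  I := A.I ×ˢ B.I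
  F := A.F ×ˢ B.F
  det := fun p a q q' h h' =>
    Prod.ext (A.det p.1 a q.1 q'.1 h.1 h'.1) (B.det p.2 a q.2 q'.2 h.2 h'.2)
  codet := fun p p' a q h h' =>
    Prod.ext (A.codet p.1 p'.1 a q.1 h.1 h'.1) (B.codet p.2 p'.2 a q.2 h.2 h'.2)

theorem prodNFA_path {α : Type} (A B : RevNFA α) (p q : A.Q × B.Q) (w : List α) :
    (prodNFA A B).Path p w q ↔ A.Path p.1 w q.1 ∧ B.Path p.2 w q.2 := by
  constructor
  · intro h
    revert p q h
    show ∀ (p q : (prodNFA A B).Q), (prodNFA A B).Path p w q → A.Path p.1 w q.1 ∧ B.Path p.2 w q.2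
    intro p q h
    induction h with
    | nil q => exact ⟨RevNFA.Path.nil _, RevNFA.Path.nil _⟩
    | cons hd _ ih => exact ⟨RevNFA.Path.cons hd.1 ih.1, RevNFA.Path.cons hd.2 ih.2⟩
  · obtain ⟨p1, p2⟩ := p
    obtain ⟨q1, q2⟩ := q
    rintro ⟨h1, h2⟩
    simp only at h1 h2
    induction w generalizing p1 p2 with
    | nil =>
      cases h1; cases h2
      exact RevNFA.Path.nil _
    | cons a w ih =>
      cases h1 with
      | cons hd1 t1 =>
        cases h2 with
        | cons hd2 t2 =>
          exact RevNFA.Path.cons (A := prodNFA A B) ⟨hd1, hd2⟩ (ih _ _ t1 t2)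

end RevWA

open RevWA in
theorem stmt5 (α : Type) [Fintype α] [Nonempty α]
    (L K : Set (List α)) (hL : L ∈ RevL1B α) (hK : K ∈ RevL1B α) :
    L ∩ K ∈ RevL1B α := by
  obtain ⟨A, ⟨qA, hqA⟩, rfl⟩ := hL
  obtain ⟨B, ⟨qB, hqB⟩, rfl⟩ := hK
  refine ⟨prodNFA A B, ⟨(qA, qB), ?_⟩, ?_⟩
  · show A.I ×ˢ B.I = _
    rw [hqA, hqB, Set.singleton_prod_singleton]
    exact rfl
  · ext w
    constructor
    · rintro ⟨p, hp, q, hq, hpath⟩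
      replace hpath := (prodNFA_path A B p q w).1 hpath
      exact ⟨⟨p.1, hp.1, q.1, hq.1, hpath.1⟩, ⟨p.2, hp.2, q.2, hq.2, hpath.2⟩⟩
    · rintro ⟨⟨p1, hp1, q1, hq1, h1⟩, ⟨p2, hp2, q2, hq2, h2⟩⟩
      exact ⟨(p1, p2), ⟨hp1, hp2⟩, (q1, q2), ⟨hq1, hq2⟩,
        (prodNFA_path A B _ _ _).2 ⟨h1, h2⟩⟩
end

section
/- Let Σ be an alphabet. If L ∈ RevL(ZMod 2, Σ), then the complement (List Σ) \ L also belongs to RevL(ZMod 2, Σ). -/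
open Matrix

open RevWA in
theorem stmt6 (α : Type) [Fintype α] [Nonempty α]
    (L : Set (List α)) (hL : L ∈ RevL (ZMod 2) α) :
    Lᶜ ∈ RevL (ZMod 2) α := by
  classical
  obtain ⟨r, ⟨A, hrev, hser⟩, hsupp⟩ := hL
  let e : Fin A.n ⊕ Fin 1 ≃ Fin (A.n + 1) := finSumFinEquiv
  let B : WA (ZMod 2) α :=
    { n := A.n + 1
      init := Sum.elim A.init 1 ∘ e.symm
      trans := fun a => (Matrix.fromBlocks (A.trans a) 0 0 1).submatrix e.symm e.symm
      final := Sum.elim A.final 1 ∘ e.symm }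
  have hmat : ∀ w, B.matWord w =
      (Matrix.fromBlocks (A.matWord w) 0 0 1).submatrix e.symm e.symm := by
    intro w
    induction w with
    | nil =>
      simp [WA.matWord, Matrix.fromBlocks_one, Matrix.submatrix_one_equiv]
    | cons a w ih =>
      have h1 : B.matWord (a :: w) = B.trans a * B.matWord w := by
        simp [WA.matWord]
      have h2 : A.matWord (a :: w) = A.trans a * A.matWord w := by
        simp [WA.matWord]
      rw [h1, ih, h2]
      show (Matrix.fromBlocks (A.trans a) 0 0 1).submatrix e.symm e.symm *
        (Matrix.fromBlocks (A.matWord w) 0 0 1).submatrix e.symm e.symm = _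
      rw [Matrix.submatrix_mul_equiv, Matrix.fromBlocks_multiply]
      simp
  have hserB : ∀ w, B.series w = A.series w + 1 := by
    intro w
    show (Sum.elim A.init 1 ∘ e.symm) ⬝ᵥ (B.matWord w).mulVec (Sum.elim A.final 1 ∘ e.symm)
        = A.series w + 1
    rw [hmat, Matrix.submatrix_mulVec_equiv]
    have hv : (Sum.elim A.final 1 ∘ ⇑e.symm) ∘ ⇑e.symm.symm = Sum.elim A.final 1 := by
      funext x; simp
    rw [hv, comp_equiv_dotProduct_comp_equiv]
    simp [WA.series, dotProduct, Matrix.mulVec, Fintype.sum_sum_type,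
      Matrix.fromBlocks, Matrix.one_apply, Fin.eq_zero]
  have hrevB : B.Reversible := by
    intro a
    obtain ⟨hr, hc⟩ := hrev a
    constructor
    · intro i j j' h1 h2
      apply e.symm.injective
      revert h1 h2
      show (Matrix.fromBlocks (A.trans a) 0 0 1) (e.symm i) (e.symm j) ≠ 0 →
        (Matrix.fromBlocks (A.trans a) 0 0 1) (e.symm i) (e.symm j') ≠ 0 → _
      rcases e.symm i with p | p <;> rcases hj : e.symm j with q | q <;>
        rcases hj' : e.symm j' with q' | q' <;>
        simp [Matrix.fromBlocks] <;> intro h1 h2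
      · exact hr p q q' h1 h2
      · exact Subsingleton.elim q q'
    · intro i i' j h1 h2
      apply e.symm.injective
      revert h1 h2
      show (Matrix.fromBlocks (A.trans a) 0 0 1) (e.symm i) (e.symm j) ≠ 0 →
        (Matrix.fromBlocks (A.trans a) 0 0 1) (e.symm i') (e.symm j) ≠ 0 → _
      rcases e.symm j with q | q <;> rcases hi : e.symm i with p | p <;>
        rcases hi' : e.symm i' with p' | p' <;>
        simp [Matrix.fromBlocks] <;> intro h1 h2
      · exact hc p p' q h1 h2
      · exact Subsingleton.elim p p'
  refine ⟨B.series, ⟨B, hrevB, rfl⟩, ?_⟩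
  ext w
  have hz : ∀ x : ZMod 2, x + 1 ≠ 0 ↔ x = 0 := by decide
  have : w ∈ supp B.series ↔ A.series w = 0 := by
    simp [supp, hserB, hz]
  rw [this]
  have : w ∈ Lᶜ ↔ ¬ r w ≠ 0 := by
    rw [← hsupp]; simp [supp]
  rw [this, hser]
  tauto
end

section
/- Let Σ be an alphabet. Every language L ⊆ List Σ recognized by a reversible NFA over Σ belongs to RevL(ZMod 2, Σ), i.e., RevL(𝔹,Σ) ⊆ RevL(ZMod 2, Σ). -/
open Matrix

open scoped Classical

namespace RevWA

attribute [local instance] RevNFA.fintypeQ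

variable {α : Type}

theorem path_det (A : RevNFA α) {p q q' : A.Q} {w : List α}
    (h : A.Path p w q) (h' : A.Path p w q') : q = q' := by
  induction h generalizing q' with
  | nil => cases h'; rfl
  | cons hd _ ih =>
    cases h' with
    | cons hd' htl' => exact ih (A.det _ _ _ _ hd hd' ▸ htl')

theorem path_nil_iff (A : RevNFA α) {p q : A.Q} : A.Path p [] q ↔ p = q := by
  constructor
  · intro h; cases h; rfl
  · rintro rfl; exact RevNFA.Path.nil p

theorem path_cons_iff (A : RevNFA α) {p r : A.Q} {a : α} {w : List α} :
    A.Path p (a :: w) r ↔ ∃ q, A.δ p a q ∧ A.Path q w r := by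
  constructor
  · intro h; cases h with | cons hd tl => exact ⟨_, hd, tl⟩
  · rintro ⟨q, hd, tl⟩; exact RevNFA.Path.cons hd tl

/-- One-letter matrix on `Option A.Q`. -/
noncomputable def dmat (A : RevNFA α) (a : α) :
    Matrix (Option A.Q) (Option A.Q) (ZMod 2) := fun x y =>
  match x, y with
  | none, none => 1
  | some p, some q => if A.δ p a q then 1 else 0
  | _, _ => 0

/-- Word matrix on `Option A.Q`. -/
noncomputable def dpath (A : RevNFA α) (w : List α) :
    Matrix (Option A.Q) (Option A.Q) (ZMod 2) := fun x y =>
  match x, y with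
  | none, none => 1
  | some p, some q => if A.Path p w q then 1 else 0
  | _, _ => 0

theorem dmat_det (A : RevNFA α) {a : α} {x y y' : Option A.Q}
    (h : dmat A a x y ≠ 0) (h' : dmat A a x y' ≠ 0) : y = y' := by
  match x, y, y' with
  | none, none, none => rfl
  | none, none, some q => exact absurd rfl h'
  | none, some q, _ => exact absurd rfl h
  | some p, none, _ => exact absurd rfl h
  | some p, some q, none => exact absurd rfl h'
  | some p, some q, some q' =>
    simp only [dmat, ne_eq, ite_eq_right_iff, not_forall] at h h'
    exact congrArg some (A.det _ _ _ _ h.1 h'.1)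

theorem dmat_codet (A : RevNFA α) {a : α} {x x' y : Option A.Q}
    (h : dmat A a x y ≠ 0) (h' : dmat A a x' y ≠ 0) : x = x' := by
  match x, x', y with
  | none, none, none => rfl
  | some q, _, none => exact absurd rfl h
  | none, some q, none => exact absurd rfl h'
  | none, _, some q => exact absurd rfl h
  | some p, none, some q => exact absurd rfl h'
  | some p, some p', some q =>
    simp only [dmat, ne_eq, ite_eq_right_iff, not_forall] at h h'
    exact congrArg some (A.codet _ _ _ _ h.1 h'.1)

theorem dpath_eq (A : RevNFA α) (w : List α) :
    (w.map (dmat A)).prod = dpath A w := by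
  induction w with
  | nil =>
    ext x y
    simp only [List.map_nil, List.prod_nil]
    match x, y with
    | none, none => simp [dpath, Matrix.one_apply]
    | none, some q => simp [dpath, Matrix.one_apply]
    | some p, none => simp [dpath, Matrix.one_apply]
    | some p, some q => simp [dpath, Matrix.one_apply, path_nil_iff]
  | cons a w ih =>
    ext x y
    rw [List.map_cons, List.prod_cons, ih]
    rw [Matrix.mul_apply, Fintype.sum_option]
    match x, y with
    | none, none => simp [dmat, dpath]
    | none, some q => simp [dmat, dpath]
    | some p, none => simp [dmat, dpath]
    | some p, some r =>
      simp only [dmat, dpath, mul_ite, mul_one, mul_zero, ite_mul, zero_mul, one_mul, zero_add]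
      by_cases h : A.Path p (a :: w) r
      · obtain ⟨q, hd, tl⟩ := (path_cons_iff A).mp h
        rw [if_pos h, Finset.sum_eq_single q]
        · simp [hd, tl]
        · intro q' _ hne
          by_cases hd' : A.δ p a q'
          · exact absurd (A.det _ _ _ _ hd' hd) hne
          · simp [hd']
        · simp
      · rw [if_neg h, Finset.sum_eq_zero]
        intro q _
        by_cases hd : A.δ p a q
        · have : ¬ A.Path q w r := fun tl => h ((path_cons_iff A).mpr ⟨q, hd, tl⟩)
          simp [this]
        · simp [hd]

section Big

variable (A : RevNFA α)

/-- The state space of the big automaton. -/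
abbrev Sigma' (A : RevNFA α) := Option (↥A.I → Option A.Q)

noncomputable instance : Fintype ↥A.I := (Set.toFinite A.I).fintype
noncomputable instance : DecidableEq ↥A.I := Classical.decEq _

/-- Component initial vector. -/
noncomputable def iv (p : ↥A.I) : Option A.Q → ZMod 2 := fun x =>
  match x with
  | none => 1
  | some q => if q = (p : A.Q) then 1 else 0

/-- Component final vector. -/
noncomputable def fv : Option A.Q → ZMod 2 := fun x =>
  match x with
  | none => 1
  | some q => if q ∈ A.F then 1 else 0

/-- Big transition matrix. -/
noncomputable def T (a : α) : Matrix (Sigma' A) (Sigma' A) (ZMod 2) := fun x y =>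
  match x, y with
  | none, none => 1
  | some f, some g => ∏ p, dmat A a (f p) (g p)
  | _, _ => 0

/-- Big word matrix. -/
noncomputable def P (w : List α) : Matrix (Sigma' A) (Sigma' A) (ZMod 2) := fun x y =>
  match x, y with
  | none, none => 1
  | some f, some g => ∏ p, dpath A w (f p) (g p)
  | _, _ => 0

theorem prod_eq_ite {ι : Type} [Fintype ι] (f g : ι → Option A.Q) :
    (∏ p, (if f p = g p then (1 : ZMod 2) else 0)) = if f = g then 1 else 0 := by
  by_cases h : f = g
  · subst h; simp
  · rw [if_neg h, Finset.prod_eq_zero (Finset.mem_univ (Classical.choose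
      (Function.ne_iff.mp h)))]
    simp [Classical.choose_spec (Function.ne_iff.mp h)]

theorem P_eq (w : List α) : ((w.map (T A)).prod) = P A w := by
  induction w with
  | nil =>
    ext x y
    simp only [List.map_nil, List.prod_nil]
    match x, y with
    | none, none => simp [P, Matrix.one_apply]
    | none, some g => simp [P, Matrix.one_apply]
    | some f, none => simp [P, Matrix.one_apply]
    | some f, some g =>
      rw [Matrix.one_apply]
      show _ = ∏ p, dpath A [] (f p) (g p)
      have : ∀ p : ↥A.I, dpath A [] (f p) (g p)
          = if f p = g p then 1 else 0 := by
        intro p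
        match hf : f p, hg : g p with
        | none, none => simp [dpath]
        | none, some q => simp [dpath]
        | some q, none => simp [dpath]
        | some q, some q' => simp [dpath, path_nil_iff]
      rw [Finset.prod_congr rfl (fun p _ => this p), prod_eq_ite]
      by_cases h : f = g <;> simp [h]
  | cons a w ih =>
    ext x y
    rw [List.map_cons, List.prod_cons, ih]
    rw [Matrix.mul_apply, Fintype.sum_option]
    match x, y with
    | none, none => simp [T, P]
    | none, some g => simp [T, P]
    | some f, none =>
      show (T A a (some f) none) * _ + _ = (0 : ZMod 2)
      have h1 : T A a (some f) none = 0 := rfl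
      have h2 : ∀ g, P A w (some g) none = 0 := fun g => rfl
      simp [h1, h2]
    | some f, some h =>
      show (T A a (some f) none) * _ + _ = ∏ p, dpath A (a :: w) (f p) (h p)
      have h1 : T A a (some f) none = 0 := rfl
      rw [h1, zero_mul, zero_add]
      have step : ∀ g, T A a (some f) (some g) * P A w (some g) (some h)
          = ∏ p, (dmat A a (f p) (g p) * dpath A w (g p) (h p)) := by
        intro g
        show (∏ p, dmat A a (f p) (g p)) * (∏ p, dpath A w (g p) (h p)) = _
        rw [← Finset.prod_mul_distrib]
      rw [Finset.sum_congr rfl (fun g _ => step g)]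
      have hps := Fintype.prod_sum (κ := fun _ : ↥A.I => Option A.Q)
        (fun p o => dmat A a (f p) o * dpath A w o (h p))
      rw [← hps]
      have key : ∀ p : ↥A.I,
          (∑ o : Option A.Q, dmat A a (f p) o * dpath A w o (h p))
          = dpath A (a :: w) (f p) (h p) := by
        intro p
        have := congrFun (congrFun (dpath_eq A (a :: w)) (f p)) (h p)
        rw [List.map_cons, List.prod_cons, dpath_eq A w] at this
        rw [← this, Matrix.mul_apply]
      exact Finset.prod_congr rfl (fun p _ => key p)

/-- Initial vector. -/
noncomputable def ivec : Sigma' A → ZMod 2 := fun x =>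
  match x with
  | none => 1
  | some f => ∏ p, iv A p (f p)

/-- Final vector. -/
noncomputable def fvec : Sigma' A → ZMod 2 := fun x =>
  match x with
  | none => 1
  | some g => ∏ p, fv A (g p)

theorem comp_sum (p : ↥A.I) (w : List α) :
    (∑ x : Option A.Q, iv A p x * ∑ o : Option A.Q, dpath A w x o * fv A o)
      = 1 + if ∃ q ∈ A.F, A.Path (p : A.Q) w q then 1 else 0 := by
  have h1 : (∑ o : Option A.Q, dpath A w none o * fv A o) = 1 := by
    rw [Fintype.sum_option]
    have hz : ∀ q : A.Q, dpath A w none (some q) = 0 := fun q => rfl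
    have ho : dpath A w none none = 1 := rfl
    have hf : fv A none = 1 := rfl
    simp [hz, ho, hf]
  have h2 : ∀ p0 : A.Q, (∑ o : Option A.Q, dpath A w (some p0) o * fv A o)
      = if ∃ q ∈ A.F, A.Path p0 w q then 1 else 0 := by
    intro p0
    rw [Fintype.sum_option]
    have h0 : dpath A w (some p0) none = 0 := rfl
    have h3 : ∀ q, dpath A w (some p0) (some q)
        = if A.Path p0 w q then 1 else 0 := fun q => rfl
    rw [h0, zero_mul, zero_add]
    by_cases h : ∃ q ∈ A.F, A.Path p0 w q
    · obtain ⟨q, hqF, hqP⟩ := h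
      rw [if_pos ⟨q, hqF, hqP⟩, Finset.sum_eq_single q]
      · simp [h3, hqP, fv, hqF]
      · intro q' _ hne
        by_cases hP : A.Path p0 w q'
        · exact absurd (path_det A hP hqP) hne
        · simp [h3, hP]
      · simp
    · rw [if_neg h, Finset.sum_eq_zero]
      intro q _
      by_cases hP : A.Path p0 w q
      · have hq : q ∉ A.F := fun hq => h ⟨q, hq, hP⟩
        simp [h3, hP, fv, hq]
      · simp [h3, hP]
  rw [Fintype.sum_option]
  have h4 : iv A p none = 1 := rfl
  rw [h4, h1, mul_one]
  congr 1
  rw [Finset.sum_eq_single ((p : A.Q))]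
  · have hp1 : iv A p (some (p : A.Q)) = 1 := by simp [iv]
    rw [hp1, one_mul, h2]
  · intro q' _ hne
    have hq0 : iv A p (some q') = 0 := by simp [iv, hne]
    rw [hq0, zero_mul]
  · simp

theorem series_val (w : List α) :
    ivec A ⬝ᵥ (P A w) *ᵥ fvec A
      = 1 + ∏ p : ↥A.I,
          (1 + if ∃ q ∈ A.F, A.Path (p : A.Q) w q then (1 : ZMod 2) else 0) := by
  rw [dotProduct, Fintype.sum_option]
  have hmv : ∀ x, ((P A w) *ᵥ fvec A) x = ∑ y, P A w x y * fvec A y := fun x => rfl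
  have hnone : ((P A w) *ᵥ fvec A) none = 1 := by
    rw [hmv, Fintype.sum_option]
    have hz : ∀ g, P A w none (some g) = 0 := fun g => rfl
    have ho : P A w none none = 1 := rfl
    have hf : fvec A none = 1 := rfl
    simp [hz, ho, hf]
  rw [hnone]
  have hsome : ∀ f, ivec A (some f) * ((P A w) *ᵥ fvec A) (some f)
      = ∏ p : ↥A.I, (∑ o : Option A.Q,
          iv A p (f p) * (dpath A w (f p) o * fv A o)) := by
    intro f
    rw [hmv, Fintype.sum_option]
    have hfn : P A w (some f) none = 0 := rfl
    rw [hfn, zero_mul, zero_add, Finset.mul_sum]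
    have step : ∀ g, ivec A (some f) * (P A w (some f) (some g) * fvec A (some g))
        = ∏ p, (iv A p (f p) * (dpath A w (f p) (g p) * fv A (g p))) := by
      intro g
      show (∏ p, iv A p (f p)) * ((∏ p, dpath A w (f p) (g p)) * (∏ p, fv A (g p))) = _
      rw [← Finset.prod_mul_distrib, ← Finset.prod_mul_distrib]
    have hps := Fintype.prod_sum (κ := fun _ : ↥A.I => Option A.Q)
      (fun p o => iv A p (f p) * (dpath A w (f p) o * fv A o))
    rw [Finset.sum_congr rfl (fun g _ => step g), ← hps]
  have hps2 := Fintype.prod_sum (κ := fun _ : ↥A.I => Option A.Q)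
    (fun p x => ∑ o : Option A.Q, iv A p x * (dpath A w x o * fv A o))
  rw [Finset.sum_congr rfl (fun f _ => hsome f), ← hps2]
  have hione : ivec A none = 1 := rfl
  rw [hione, one_mul]
  congr 1
  refine Finset.prod_congr rfl (fun p _ => ?_)
  rw [← comp_sum A p w]
  refine Finset.sum_congr rfl (fun x _ => ?_)
  rw [Finset.mul_sum]

theorem T_rowOk (a : α) {x y y' : Sigma' A}
    (h : T A a x y ≠ 0) (h' : T A a x y' ≠ 0) : y = y' := by
  match x, y, y' with
  | none, none, none => rfl
  | none, none, some g => exact absurd rfl h'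
  | none, some g, _ => exact absurd rfl h
  | some f, none, _ => exact absurd rfl h
  | some f, some g, none => exact absurd rfl h'
  | some f, some g, some g' =>
    have hg : ∀ p : ↥A.I, dmat A a (f p) (g p) ≠ 0 := fun p =>
      Finset.prod_ne_zero_iff.mp h p (Finset.mem_univ p)
    have hg' : ∀ p : ↥A.I, dmat A a (f p) (g' p) ≠ 0 := fun p =>
      Finset.prod_ne_zero_iff.mp h' p (Finset.mem_univ p)
    exact congrArg some (funext fun p => dmat_det A (hg p) (hg' p))

theorem T_colOk (a : α) {x x' y : Sigma' A}
    (h : T A a x y ≠ 0) (h' : T A a x' y ≠ 0) : x = x' := by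
  match x, x', y with
  | none, none, none => rfl
  | some f, _, none => exact absurd rfl h
  | none, some f, none => exact absurd rfl h'
  | none, _, some g => exact absurd rfl h
  | some f, none, some g => exact absurd rfl h'
  | some f, some f', some g =>
    have hg : ∀ p : ↥A.I, dmat A a (f p) (g p) ≠ 0 := fun p =>
      Finset.prod_ne_zero_iff.mp h p (Finset.mem_univ p)
    have hg' : ∀ p : ↥A.I, dmat A a (f' p) (g p) ≠ 0 := fun p =>
      Finset.prod_ne_zero_iff.mp h' p (Finset.mem_univ p)
    exact congrArg some (funext fun p => dmat_codet A (hg p) (hg' p))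

/-- The equivalence between `Fin (card)` and `Sigma' A`. -/
noncomputable def eqv : Fin (Fintype.card (Sigma' A)) ≃ Sigma' A :=
  (Fintype.equivFin (Sigma' A)).symm

/-- The big weighted automaton over `ZMod 2`. -/
noncomputable def bigWA : WA (ZMod 2) α where
  n := Fintype.card (Sigma' A)
  init := ivec A ∘ eqv A
  trans := fun a => (T A a).submatrix (eqv A) (eqv A)
  final := fvec A ∘ eqv A

theorem P_cons (a : α) (w : List α) : P A (a :: w) = T A a * P A w := by
  rw [← P_eq, List.map_cons, List.prod_cons, P_eq]

theorem bigWA_matWord (w : List α) :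
    (bigWA A).matWord w = (P A w).submatrix (eqv A) (eqv A) := by
  induction w with
  | nil =>
    show ((List.map (bigWA A).trans []).prod) = _
    rw [List.map_nil, List.prod_nil, ← P_eq, List.map_nil, List.prod_nil,
      Matrix.submatrix_one_equiv]
    rfl
  | cons a w ih =>
    show ((List.map (bigWA A).trans (a :: w)).prod) = _
    rw [List.map_cons, List.prod_cons]
    have ih' : (List.map (bigWA A).trans w).prod = (P A w).submatrix (eqv A) (eqv A) := ih
    rw [ih', P_cons,
      ← Matrix.submatrix_mul_equiv (T A a) (P A w) (eqv A) (eqv A) (eqv A)]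
    rfl

theorem bigWA_series (w : List α) :
    (bigWA A).series w = ivec A ⬝ᵥ (P A w) *ᵥ fvec A := by
  unfold WA.series
  rw [bigWA_matWord]
  have hv : ((fvec A ∘ (eqv A)) ∘ (eqv A).symm) = fvec A := by
    funext x; simp
  have h1 : (P A w).submatrix (eqv A) (eqv A) *ᵥ ((bigWA A).final)
      = ((P A w) *ᵥ fvec A) ∘ (eqv A) := by
    show (P A w).submatrix (eqv A) (eqv A) *ᵥ (fvec A ∘ (eqv A)) = _
    rw [Matrix.submatrix_mulVec_equiv, hv]
  erw [h1]
  show (ivec A ∘ (eqv A)) ⬝ᵥ _ = _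
  rw [dotProduct, dotProduct]
  exact Equiv.sum_comp (eqv A) (fun x => ivec A x * ((P A w) *ᵥ fvec A) x)

theorem bigWA_reversible : (bigWA A).Reversible := by
  intro a
  constructor
  · intro i j j' h h'
    exact (eqv A).injective (T_rowOk A a h h')
  · intro i i' j h h'
    exact (eqv A).injective (T_colOk A a h h')

theorem bigWA_supp : supp (bigWA A).series = A.lang := by
  ext w
  simp only [supp, Set.mem_setOf_eq, bigWA_series, series_val]
  by_cases h : w ∈ A.lang
  · obtain ⟨p, hpI, q, hqF, hP⟩ := h
    have hfac : (1 + if ∃ q ∈ A.F, A.Path ((⟨p, hpI⟩ : ↥A.I) : A.Q) w q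
        then (1 : ZMod 2) else 0) = 0 := by
      rw [if_pos ⟨q, hqF, hP⟩]; decide
    rw [Finset.prod_eq_zero (Finset.mem_univ (⟨p, hpI⟩ : ↥A.I)) hfac]
    simpa using ⟨p, hpI, q, hqF, hP⟩
  · have hfac : ∀ p : ↥A.I, (1 + if ∃ q ∈ A.F, A.Path (p : A.Q) w q
        then (1 : ZMod 2) else 0) = 1 := by
      intro p
      rw [if_neg, add_zero]
      rintro ⟨q, hqF, hP⟩
      exact h ⟨(p : A.Q), p.2, q, hqF, hP⟩
    rw [Finset.prod_congr rfl (fun p _ => hfac p), Finset.prod_const_one]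
    have h11 : (1 + 1 : ZMod 2) = 0 := by decide
    rw [h11]
    simp [h]

end Big

end RevWA

open RevWA in
theorem stmt8 (α : Type) [Fintype α] [Nonempty α] :
    RevLB α ⊆ RevL (ZMod 2) α := by
  rintro L ⟨A, rfl⟩
  exact ⟨(bigWA A).series, ⟨bigWA A, bigWA_reversible A, rfl⟩, bigWA_supp A⟩
end

section
/- Let Σ be an alphabet. Then RevL(ZMod 2, Σ) equals the Boolean closure of RevL(𝔹,Σ): it is the smallest class of languages over Σ that contains every language recognized by a reversible NFA over Σ and is closed under finite union, finite intersection, and complement (relative to List Σ). -/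
open Matrix

namespace RevWA

/-- The Boolean closure of a class `C` of languages over `α`: the smallest class
containing `C` and closed under finite union, finite intersection, and complement
relative to `List α`. -/
inductive BoolClosure {α : Type} (C : Set (Set (List α))) : Set (List α) → Prop
  | base {L : Set (List α)} : L ∈ C → BoolClosure C L
  | empty : BoolClosure C ∅
  | univ : BoolClosure C Set.univ
  | union {L K : Set (List α)} :
      BoolClosure C L → BoolClosure C K → BoolClosure C (L ∪ K)
  | inter {L K : Set (List α)} :
      BoolClosure C L → BoolClosure C K → BoolClosure C (L ∩ K)
  | compl {L : Set (List α)} : BoolClosure C L → BoolClosure C Lᶜ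

end RevWA

namespace RevWAAux

open RevWA Matrix
open scoped Classical

variable {α : Type}

/-- Generic paths over a transition relation on an arbitrary state type. -/
inductive PathF {σ : Type} (δ : σ → α → σ → Prop) : σ → List α → σ → Prop
  | nil (q : σ) : PathF δ q [] q
  | cons {p q r : σ} {a : α} {w : List α} :
      δ p a q → PathF δ q w r → PathF δ p (a :: w) r

lemma pathF_nil_iff {σ : Type} (δ : σ → α → σ → Prop) (p q : σ) :
    PathF δ p [] q ↔ p = q := by
  constructor
  · rintro h; cases h; rfl
  · rintro rfl; exact PathF.nil p

lemma pathF_cons_iff {σ : Type} (δ : σ → α → σ → Prop) (p q : σ) (a : α) (w : List α) :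
    PathF δ p (a :: w) q ↔ ∃ r, δ p a r ∧ PathF δ r w q := by
  constructor
  · rintro h; cases h with
    | cons h1 h2 => exact ⟨_, h1, h2⟩
  · rintro ⟨r, h1, h2⟩; exact PathF.cons h1 h2

lemma pathF_det {σ : Type} {δ : σ → α → σ → Prop}
    (hdet : ∀ p a q q', δ p a q → δ p a q' → q = q') :
    ∀ {w : List α} {p q q' : σ}, PathF δ p w q → PathF δ p w q' → q = q' := by
  intro w
  induction w with
  | nil => intro p q q' h h'; rw [pathF_nil_iff] at h h'; exact h ▸ h'
  | cons a w ih =>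
      intro p q q' h h'
      rw [pathF_cons_iff] at h h'
      obtain ⟨r, hr, hp⟩ := h
      obtain ⟨r', hr', hp'⟩ := h'
      obtain rfl : r = r' := hdet _ _ _ _ hr hr'
      exact ih hp hp'

lemma path_iff_pathF (B : RevNFA α) (p : B.Q) (w : List α) (q : B.Q) :
    B.Path p w q ↔ PathF B.δ p w q := by
  constructor
  · intro h
    induction h with
    | nil q => exact PathF.nil q
    | cons h1 _ ih => exact PathF.cons h1 ih
  · intro h
    induction h with
    | nil q => exact RevNFA.Path.nil q
    | cons h1 _ ih => exact RevNFA.Path.cons h1 ih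

/-- Key lemma: the word matrix of a 0/1 reversible family of matrices over
`ZMod 2` is the indicator of the path relation. -/
lemma prod_ite_eq {σ : Type} [Fintype σ] [DecidableEq σ] (δ : σ → α → σ → Prop)
    (hdet : ∀ p a q q', δ p a q → δ p a q' → q = q')
    (M : α → Matrix σ σ (ZMod 2))
    (hM : ∀ a p q, M a p q = if δ p a q then 1 else 0) :
    ∀ (w : List α) (p q : σ),
      ((w.map M).prod) p q = if PathF δ p w q then 1 else 0 := by
  intro w
  induction w with
  | nil =>
      intro p q
      simp only [List.map_nil, List.prod_nil, Matrix.one_apply, pathF_nil_iff]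
  | cons a w ih =>
      intro p q
      simp only [List.map_cons, List.prod_cons, Matrix.mul_apply, ih, hM]
      rw [pathF_cons_iff]
      by_cases h : ∃ r, δ p a r ∧ PathF δ r w q
      · obtain ⟨r, hr, hp⟩ := h
        rw [if_pos ⟨r, hr, hp⟩]
        rw [Finset.sum_eq_single r]
        · simp [hr, hp]
        · intro b _ hb
          by_cases hd : δ p a b
          · exact absurd (hdet _ _ _ _ hd hr) hb
          · simp [hd]
        · simp
      · rw [if_neg h]
        apply Finset.sum_eq_zero
        intro b _
        by_cases hd : δ p a b
        · by_cases hp : PathF δ b w q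
          · exact absurd ⟨b, hd, hp⟩ h
          · simp [hp]
        · simp [hd]

end RevWAAux
namespace RevWAAux

open RevWA Matrix
open scoped Classical

variable {α : Type} {S : Type} [Semiring S]

/-- `rowOk` for matrices over an arbitrary index type. -/
def rowOkG {σ : Type} (M : Matrix σ σ S) : Prop :=
  ∀ i j j', M i j ≠ 0 → M i j' ≠ 0 → j = j'

/-- `colOk` for matrices over an arbitrary index type. -/
def colOkG {σ : Type} (M : Matrix σ σ S) : Prop :=
  ∀ i i' j, M i j ≠ 0 → M i' j ≠ 0 → i = i'

/-- Transport: a reversible generic automaton gives a member of `Rev`. -/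
lemma mem_Rev_of_generic {σ : Type} [Fintype σ] [DecidableEq σ] (i f : σ → S)
    (M : α → Matrix σ σ S)
    (hrow : ∀ a, rowOkG (M a)) (hcol : ∀ a, colOkG (M a)) :
    (fun w : List α => i ⬝ᵥ ((w.map M).prod).mulVec f) ∈ Rev S α := by
  classical
  set n := Fintype.card σ with hn
  set e : Fin n ≃ σ := (Fintype.equivFin σ).symm with he
  refine ⟨⟨n, i ∘ e, fun a => (M a).submatrix e e, f ∘ e⟩, ?_, ?_⟩
  · intro a
    constructor
    · intro x y y' hx hy
      exact e.injective (hrow a (e x) (e y) (e y') hx hy)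
    · intro x x' y hx hy
      exact e.injective (hcol a (e x) (e x') (e y) hx hy)
  · funext w
    have hmat : ∀ w : List α,
        ((w.map (fun a => (M a).submatrix e e)).prod) = ((w.map M).prod).submatrix e e := by
      intro w
      induction w with
      | nil => simp [Matrix.submatrix_one_equiv]
      | cons a w ih =>
          simp only [List.map_cons, List.prod_cons, ih]
          rw [Matrix.submatrix_mul_equiv]
    show (i ∘ e) ⬝ᵥ (((w.map (fun a => (M a).submatrix e e)).prod)).mulVec (f ∘ e) = _
    rw [hmat]
    rw [Matrix.submatrix_mulVec_equiv]
    have : (f ∘ ⇑e) ∘ ⇑e.symm = f := by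
      funext x; simp
    rw [this]
    simp only [dotProduct, Function.comp_apply]
    exact Fintype.sum_equiv e _ _ (fun x => rfl)

end RevWAAux
namespace RevWAAux

open RevWA Matrix
open scoped Classical

variable {α : Type} {S : Type} [Semiring S]

lemma zmod2_ne_zero_iff (x : ZMod 2) : x ≠ 0 ↔ x = 1 := by revert x; decide

lemma zmod2_eq_ite (x : ZMod 2) : x = if x ≠ 0 then 1 else 0 := by revert x; decide

lemma zmod2_add_one_ne (x : ZMod 2) : x + 1 ≠ 0 ↔ x = 0 := by revert x; decide

lemma zmod2_mul_ne (x y : ZMod 2) : x * y ≠ 0 ↔ x ≠ 0 ∧ y ≠ 0 := by revert x y; decide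

lemma empty_mem_RevL : (∅ : Set (List α)) ∈ RevL (ZMod 2) α := by
  refine ⟨fun _ => 0, ⟨⟨0, Fin.elim0, fun _ => 1, Fin.elim0⟩, ?_, ?_⟩, ?_⟩
  · intro a; exact ⟨fun i => i.elim0, fun i => i.elim0⟩
  · funext w
    simp [WA.series, dotProduct]
  · simp [supp]

section Sum

variable (A B : WA S α)

lemma sum_matWord (w : List α) :
    ((w.map (fun a => Matrix.fromBlocks (A.trans a) 0 0 (B.trans a))).prod)
      = Matrix.fromBlocks (A.matWord w) 0 0 (B.matWord w) := by
  induction w with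
  | nil => simp [WA.matWord, Matrix.fromBlocks_one]
  | cons a w ih =>
      simp only [List.map_cons, List.prod_cons, ih, Matrix.fromBlocks_multiply]
      simp [WA.matWord]

lemma sum_series (w : List α) :
    (Sum.elim A.init B.init) ⬝ᵥ
      (((w.map (fun a => Matrix.fromBlocks (A.trans a) 0 0 (B.trans a))).prod)).mulVec
        (Sum.elim A.final B.final) = A.series w + B.series w := by
  rw [sum_matWord, Matrix.fromBlocks_mulVec]
  simp only [Sum.elim_comp_inl, Sum.elim_comp_inr, Matrix.zero_mulVec, add_zero,
    zero_add, WA.series, dotProduct, Fintype.sum_sum_type, Sum.elim_inl,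
    Sum.elim_inr]

lemma sum_rowOkG (hA : A.Reversible) (hB : B.Reversible) (a : α) :
    rowOkG (Matrix.fromBlocks (A.trans a) 0 0 (B.trans a)) := by
  rintro (i | i) (j | j) (j' | j') h h' <;>
    simp only [Matrix.fromBlocks_apply₁₁, Matrix.fromBlocks_apply₁₂,
      Matrix.fromBlocks_apply₂₁, Matrix.fromBlocks_apply₂₂, Matrix.zero_apply,
      ne_eq, not_true_eq_false] at h h' <;>
    first
      | exact absurd rfl h
      | exact absurd rfl h'
      | exact congrArg Sum.inl ((hA a).1 i j j' h h')
      | exact congrArg Sum.inr ((hB a).1 i j j' h h')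

lemma sum_colOkG (hA : A.Reversible) (hB : B.Reversible) (a : α) :
    colOkG (Matrix.fromBlocks (A.trans a) 0 0 (B.trans a)) := by
  rintro (i | i) (i' | i') (j | j) h h' <;>
    simp only [Matrix.fromBlocks_apply₁₁, Matrix.fromBlocks_apply₁₂,
      Matrix.fromBlocks_apply₂₁, Matrix.fromBlocks_apply₂₂, Matrix.zero_apply,
      ne_eq, not_true_eq_false] at h h' <;>
    first
      | exact absurd rfl h
      | exact absurd rfl h'
      | exact congrArg Sum.inl ((hA a).2 i i' j h h')
      | exact congrArg Sum.inr ((hB a).2 i i' j h h')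

end Sum

/-- The sum of two series in `Rev` is in `Rev`. -/
lemma add_mem_Rev {r s : List α → ZMod 2} (hr : r ∈ Rev (ZMod 2) α)
    (hs : s ∈ Rev (ZMod 2) α) : (fun w => r w + s w) ∈ Rev (ZMod 2) α := by
  obtain ⟨A, hA, rfl⟩ := hr
  obtain ⟨B, hB, rfl⟩ := hs
  have key := mem_Rev_of_generic (σ := Fin A.n ⊕ Fin B.n)
      (Sum.elim A.init B.init) (Sum.elim A.final B.final)
      (fun a => Matrix.fromBlocks (A.trans a) 0 0 (B.trans a))
      (sum_rowOkG A B hA hB) (sum_colOkG A B hA hB)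
  convert key using 1
  funext w
  exact (sum_series A B w).symm

/-- The constant series `1` is in `Rev`. -/
lemma one_mem_Rev : (fun _ : List α => (1 : ZMod 2)) ∈ Rev (ZMod 2) α := by
  refine ⟨⟨1, fun _ => 1, fun _ => 1, fun _ => 1⟩, ?_, ?_⟩
  · intro a
    exact ⟨fun i j j' _ _ => Subsingleton.elim j j',
           fun i i' j _ _ => Subsingleton.elim i i'⟩
  · funext w
    have hmat : ((w.map (fun _ : α => (1 : Matrix (Fin 1) (Fin 1) (ZMod 2)))).prod) = 1 := by
      induction w with
      | nil => simp
      | cons a w ih => simp [ih]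
    show (fun _ => (1 : ZMod 2)) ⬝ᵥ
        (((w.map (fun _ : α => (1 : Matrix (Fin 1) (Fin 1) (ZMod 2)))).prod)).mulVec
          (fun _ => 1) = 1
    rw [hmat]
    simp [dotProduct, Matrix.mulVec]

lemma compl_mem_RevL {L : Set (List α)} (h : L ∈ RevL (ZMod 2) α) :
    Lᶜ ∈ RevL (ZMod 2) α := by
  obtain ⟨r, hr, rfl⟩ := h
  refine ⟨fun w => r w + 1, add_mem_Rev hr one_mem_Rev, ?_⟩
  ext w
  simp only [supp, Set.mem_setOf_eq, Set.mem_compl_iff, zmod2_add_one_ne]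
  tauto

section Prod

variable {T : Type} [CommSemiring T] (A B : WA T α)

lemma prod_matWord (w : List α) :
    ((w.map (fun a => Matrix.kroneckerMap (· * ·) (A.trans a) (B.trans a))).prod)
      = Matrix.kroneckerMap (· * ·) (A.matWord w) (B.matWord w) := by
  induction w with
  | nil => simp [WA.matWord, Matrix.one_kronecker_one]
  | cons a w ih =>
      simp only [List.map_cons, List.prod_cons, ih]
      rw [← Matrix.mul_kronecker_mul]
      simp [WA.matWord]

lemma prod_series (w : List α) :
    (fun p : Fin A.n × Fin B.n => A.init p.1 * B.init p.2) ⬝ᵥ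
      (((w.map (fun a => Matrix.kroneckerMap (· * ·) (A.trans a) (B.trans a))).prod)).mulVec
        (fun p => A.final p.1 * B.final p.2) = A.series w * B.series w := by
  rw [prod_matWord]
  simp only [WA.series, dotProduct, Matrix.mulVec, Fintype.sum_prod_type,
    Matrix.kroneckerMap_apply]
  rw [Finset.sum_mul_sum]
  refine Finset.sum_congr rfl fun p _ => Finset.sum_congr rfl fun p' _ => ?_
  rw [show (A.init p * ∑ q, A.matWord w p q * A.final q) *
      (B.init p' * ∑ q', B.matWord w p' q' * B.final q') =
      (A.init p * B.init p') * ((∑ q, A.matWord w p q * A.final q) *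
        (∑ q', B.matWord w p' q' * B.final q')) from by ring,
    Finset.sum_mul_sum]
  congr 1
  refine Finset.sum_congr rfl fun q _ => Finset.sum_congr rfl fun q' _ => ?_
  ring

end Prod

lemma prod_rowOkG (A B : WA (ZMod 2) α) (hA : A.Reversible) (hB : B.Reversible) (a : α) :
    rowOkG (Matrix.kroneckerMap (· * ·) (A.trans a) (B.trans a)) := by
  intro p q q' h h'
  rw [Matrix.kroneckerMap_apply, zmod2_mul_ne] at h h'
  exact Prod.ext ((hA a).1 p.1 q.1 q'.1 h.1 h'.1) ((hB a).1 p.2 q.2 q'.2 h.2 h'.2)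

lemma prod_colOkG (A B : WA (ZMod 2) α) (hA : A.Reversible) (hB : B.Reversible) (a : α) :
    colOkG (Matrix.kroneckerMap (· * ·) (A.trans a) (B.trans a)) := by
  intro p p' q h h'
  rw [Matrix.kroneckerMap_apply, zmod2_mul_ne] at h h'
  exact Prod.ext ((hA a).2 p.1 p'.1 q.1 h.1 h'.1) ((hB a).2 p.2 p'.2 q.2 h.2 h'.2)

/-- The pointwise product of two series in `Rev` is in `Rev`. -/
lemma mul_mem_Rev {r s : List α → ZMod 2} (hr : r ∈ Rev (ZMod 2) α)
    (hs : s ∈ Rev (ZMod 2) α) : (fun w => r w * s w) ∈ Rev (ZMod 2) α := by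
  obtain ⟨A, hA, rfl⟩ := hr
  obtain ⟨B, hB, rfl⟩ := hs
  have key := mem_Rev_of_generic (σ := Fin A.n × Fin B.n)
      (fun p => A.init p.1 * B.init p.2) (fun p => A.final p.1 * B.final p.2)
      (fun a => Matrix.kroneckerMap (· * ·) (A.trans a) (B.trans a))
      (prod_rowOkG A B hA hB) (prod_colOkG A B hA hB)
  convert key using 1
  funext w
  exact (prod_series A B w).symm

lemma inter_mem_RevL {L K : Set (List α)} (hL : L ∈ RevL (ZMod 2) α)
    (hK : K ∈ RevL (ZMod 2) α) : L ∩ K ∈ RevL (ZMod 2) α := by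
  obtain ⟨r, hr, rfl⟩ := hL
  obtain ⟨s, hs, rfl⟩ := hK
  refine ⟨fun w => r w * s w, mul_mem_Rev hr hs, ?_⟩
  ext w
  simp [supp, zmod2_mul_ne]

lemma union_mem_RevL {L K : Set (List α)} (hL : L ∈ RevL (ZMod 2) α)
    (hK : K ∈ RevL (ZMod 2) α) : L ∪ K ∈ RevL (ZMod 2) α := by
  have : L ∪ K = (Lᶜ ∩ Kᶜ)ᶜ := by
    rw [Set.compl_inter, compl_compl, compl_compl]
  rw [this]
  exact compl_mem_RevL (inter_mem_RevL (compl_mem_RevL hL) (compl_mem_RevL hK))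

lemma univ_mem_RevL : (Set.univ : Set (List α)) ∈ RevL (ZMod 2) α := by
  refine ⟨fun _ => 1, one_mem_Rev, ?_⟩
  ext w; simp [supp]

lemma biUnion_mem_RevL {ι : Type} (T : Finset ι) (L : ι → Set (List α))
    (h : ∀ t ∈ T, L t ∈ RevL (ZMod 2) α) : (⋃ t ∈ T, L t) ∈ RevL (ZMod 2) α := by
  classical
  induction T using Finset.induction_on with
  | empty => simpa using empty_mem_RevL
  | insert a T hnotmem ih =>
      rw [Finset.set_biUnion_insert]
      exact union_mem_RevL (h a (Finset.mem_insert_self a T))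
        (ih fun t ht => h t (Finset.mem_insert_of_mem ht))

end RevWAAux
namespace RevWAAux

open RevWA Matrix
open scoped Classical

variable {α : Type}

/-- The language of words connecting a fixed state to the final set of a reversible
NFA is the support of a reversible weighted series over `ZMod 2`. -/
lemma langFrom_mem_RevL (B : RevNFA α) (p0 : B.Q) :
    {w | ∃ q ∈ B.F, B.Path p0 w q} ∈ RevL (ZMod 2) α := by
  letI := B.fintypeQ
  letI : DecidableEq B.Q := Classical.decEq _
  set M : α → Matrix B.Q B.Q (ZMod 2) :=
    fun a => Matrix.of fun p q => if B.δ p a q then 1 else 0 with hMdef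
  have hM : ∀ a p q, M a p q = if B.δ p a q then 1 else 0 := fun a p q => rfl
  have hrow : ∀ a, rowOkG (M a) := by
    intro a p q q' h h'
    rw [hM] at h h'
    by_cases h1 : B.δ p a q
    · by_cases h2 : B.δ p a q'
      · exact B.det p a q q' h1 h2
      · simp [h2] at h'
    · simp [h1] at h
  have hcol : ∀ a, colOkG (M a) := by
    intro a p p' q h h'
    rw [hM] at h h'
    by_cases h1 : B.δ p a q
    · by_cases h2 : B.δ p' a q
      · exact B.codet p p' a q h1 h2
      · simp [h2] at h'
    · simp [h1] at h
  refine ⟨_, mem_Rev_of_generic (fun p => if p = p0 then 1 else 0)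
      (fun q => if q ∈ B.F then 1 else 0) M hrow hcol, ?_⟩
  ext w
  have hmat := prod_ite_eq B.δ B.det M hM w
  simp only [supp, Set.mem_setOf_eq]
  have hsum : (fun p => if p = p0 then (1 : ZMod 2) else 0) ⬝ᵥ
      (((w.map M).prod)).mulVec (fun q => if q ∈ B.F then 1 else 0)
      = ∑ q, if PathF B.δ p0 w q ∧ q ∈ B.F then 1 else 0 := by
    simp only [dotProduct, Matrix.mulVec, ite_mul, one_mul, zero_mul]
    rw [Finset.sum_ite_eq' Finset.univ p0]
    simp only [Finset.mem_univ, if_pos]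
    refine Finset.sum_congr rfl fun q _ => ?_
    rw [hmat p0 q]
    by_cases h1 : PathF B.δ p0 w q <;> by_cases h2 : q ∈ B.F <;> simp [h1, h2]
  rw [hsum]
  by_cases hex : ∃ q, PathF B.δ p0 w q ∧ q ∈ B.F
  · obtain ⟨q0, hq0, hq0F⟩ := hex
    rw [Finset.sum_eq_single q0]
    · simp only [hq0, hq0F, and_self, if_pos]
      constructor
      · intro _
        exact ⟨q0, hq0F, (path_iff_pathF B p0 w q0).2 hq0⟩
      · intro _; exact one_ne_zero
    · intro q _ hq
      by_cases h1 : PathF B.δ p0 w q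
      · exact absurd (pathF_det B.det h1 hq0) hq
      · simp [h1]
    · simp
  · rw [Finset.sum_eq_zero]
    · simp only [ne_eq, not_true_eq_false, false_iff]
      push_neg
      intro q hqF hp
      exact hex ⟨q, (path_iff_pathF B p0 w q).1 hp, hqF⟩
    · intro q _
      rw [if_neg]
      rintro ⟨h1, h2⟩
      exact hex ⟨q, h1, h2⟩

/-- The language of a reversible NFA is in `RevL (ZMod 2)`. -/
lemma lang_mem_RevL (B : RevNFA α) : B.lang ∈ RevL (ZMod 2) α := by
  letI := B.fintypeQ
  letI : DecidableEq B.Q := Classical.decEq _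
  have : B.lang = ⋃ p ∈ B.I.toFinset, {w | ∃ q ∈ B.F, B.Path p w q} := by
    ext w
    simp only [RevNFA.lang, Set.mem_setOf_eq, Set.mem_iUnion, Set.mem_toFinset]
    tauto
  rw [this]
  exact biUnion_mem_RevL _ _ fun p _ => langFrom_mem_RevL B p

/-- Odd-count combinations of languages in a class lie in its Boolean closure. -/
lemma odd_mem_boolClosure {ι : Type} (C : Set (Set (List α))) (T : Finset ι)
    (L : ι → Set (List α)) (h : ∀ t ∈ T, BoolClosure C (L t)) :
    BoolClosure C {w | Odd ((T.filter fun t => w ∈ L t).card)} := by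
  classical
  induction T using Finset.induction_on with
  | empty =>
      have : {w : List α | Odd (((∅ : Finset ι).filter fun t => w ∈ L t).card)} = ∅ := by
        ext w; simp [Nat.odd_iff]
      rw [this]
      exact BoolClosure.empty
  | insert a T hnot ih =>
      have hrec := ih fun t ht => h t (Finset.mem_insert_of_mem ht)
      have hmem := h a (Finset.mem_insert_self a T)
      have hset : {w : List α | Odd (((insert a T).filter fun t => w ∈ L t).card)} =
          (L a ∩ {w | Odd ((T.filter fun t => w ∈ L t).card)}ᶜ) ∪
          ((L a)ᶜ ∩ {w | Odd ((T.filter fun t => w ∈ L t).card)}) := by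
        ext w
        by_cases hw : w ∈ L a
        · have hnotf : a ∉ T.filter fun t => w ∈ L t :=
            fun hc => hnot (Finset.mem_of_mem_filter a hc)
          simp only [Set.mem_setOf_eq, Finset.filter_insert]
          rw [if_pos hw, Finset.card_insert_of_notMem hnotf]
          simp only [Set.mem_union, Set.mem_inter_iff, Set.mem_compl_iff,
            Set.mem_setOf_eq, hw, true_and, not_true, false_and, or_false,
            Nat.odd_add_one]
        · simp only [Set.mem_setOf_eq, Finset.filter_insert]
          rw [if_neg hw]
          simp [hw]
      rw [hset]
      exact BoolClosure.union (BoolClosure.inter hmem (BoolClosure.compl hrec))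
        (BoolClosure.inter (BoolClosure.compl hmem) hrec)

/-- ⊆ direction: the support of a reversible series over `ZMod 2` is in the
Boolean closure of languages of reversible NFAs. -/
lemma supp_mem_boolClosure (A : WA (ZMod 2) α) (hA : A.Reversible) :
    BoolClosure (RevLB α) (supp A.series) := by
  set δ : Fin A.n → α → Fin A.n → Prop := fun p a q => A.trans a p q ≠ 0 with hδ
  have hdet : ∀ p a q q', δ p a q → δ p a q' → q = q' :=
    fun p a q q' h h' => (hA a).1 p q q' h h'
  have hcodet : ∀ p p' a q, δ p a q → δ p' a q → p = p' :=
    fun p p' a q h h' => (hA a).2 p p' q h h'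
  have hM : ∀ a p q, A.trans a p q
      = @ite (ZMod 2) (δ p a q) (Classical.propDecidable _) 1 0 := by
    intro a p q
    by_cases h : A.trans a p q = 0
    · rw [h, if_neg (show ¬ δ p a q from fun hc => hc h)]
    · rw [if_pos (show δ p a q from h), (zmod2_ne_zero_iff _).1 h]
  have hmat := prod_ite_eq δ hdet A.trans hM
  set L : Fin A.n × Fin A.n → Set (List α) := fun pq => {w | PathF δ pq.1 w pq.2} with hL
  set T : Finset (Fin A.n × Fin A.n) :=
    Finset.univ.filter (fun pq => A.init pq.1 ≠ 0 ∧ A.final pq.2 ≠ 0) with hT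
  have hser : ∀ w, A.series w = (((T.filter fun pq => w ∈ L pq).card : ℕ) : ZMod 2) := by
    intro w
    have h1 : A.series w = ∑ pq : Fin A.n × Fin A.n,
        A.init pq.1 * ((w.map A.trans).prod pq.1 pq.2 * A.final pq.2) := by
      simp only [WA.series, WA.matWord, dotProduct, Matrix.mulVec,
        Finset.mul_sum, Fintype.sum_prod_type]
    rw [h1]
    have h2 : ∀ pq : Fin A.n × Fin A.n,
        A.init pq.1 * ((w.map A.trans).prod pq.1 pq.2 * A.final pq.2)
        = if (A.init pq.1 ≠ 0 ∧ A.final pq.2 ≠ 0) ∧ w ∈ L pq then 1 else 0 := by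
      intro pq
      rw [hmat w pq.1 pq.2]
      by_cases e1 : A.init pq.1 = 0
      · simp [hL, e1]
      · by_cases e2 : A.final pq.2 = 0
        · simp [hL, e2]
        · have hi := (zmod2_ne_zero_iff (A.init pq.1)).1 e1
          have hf := (zmod2_ne_zero_iff (A.final pq.2)).1 e2
          by_cases e3 : PathF δ pq.1 w pq.2
          · simp [hL, Set.mem_setOf_eq, hi, hf, e3]
          · simp [hL, Set.mem_setOf_eq, hi, hf, e3]
    rw [Finset.sum_congr rfl fun pq _ => h2 pq]
    rw [Finset.sum_boole]
    congr 1
    rw [hT, Finset.filter_filter]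
  have hsupp : supp A.series = {w | Odd ((T.filter fun pq => w ∈ L pq).card)} := by
    ext w
    simp only [supp, Set.mem_setOf_eq, hser w]
    rw [Ne, ZMod.natCast_eq_zero_iff, Nat.odd_iff]
    omega
  rw [hsupp]
  apply odd_mem_boolClosure
  intro pq _
  apply BoolClosure.base
  refine ⟨⟨Fin A.n, inferInstance, δ, {pq.1}, {pq.2}, hdet, hcodet⟩, ?_⟩
  ext w
  simp only [RevNFA.lang, Set.mem_setOf_eq, Set.mem_singleton_iff, hL]
  constructor
  · rintro ⟨p, rfl, q, rfl, hp⟩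
    exact (path_iff_pathF _ _ _ _).1 hp
  · intro hp
    exact ⟨pq.1, rfl, pq.2, rfl, (path_iff_pathF _ _ _ _).2 hp⟩

end RevWAAux

open RevWA in
theorem stmt10 (α : Type) [Fintype α] [Nonempty α] :
    RevL (ZMod 2) α = {L : Set (List α) | BoolClosure (RevLB α) L} := by
  ext L
  simp only [Set.mem_setOf_eq]
  constructor
  · rintro ⟨r, ⟨A, hA, rfl⟩, rfl⟩
    exact RevWAAux.supp_mem_boolClosure A hA
  · intro h
    induction h with
    | base hC =>
        rename_i K
        obtain ⟨B, rfl⟩ := hC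
        exact RevWAAux.lang_mem_RevL B
    | empty => exact RevWAAux.empty_mem_RevL
    | univ => exact RevWAAux.univ_mem_RevL
    | union h1 h2 ih1 ih2 => exact RevWAAux.union_mem_RevL ih1 ih2
    | inter h1 h2 ih1 ih2 => exact RevWAAux.inter_mem_RevL ih1 ih2
    | compl h ih => exact RevWAAux.compl_mem_RevL ih
end

section
/- Let R be a ring, Σ an alphabet, n : ℕ, and L₁, …, Lₙ ⊆ List Σ languages indexed by Fin n. Then for every word w ∈ List Σ, the element Σ over nonempty subsets X ⊆ Fin n of (−2)^(|X|−1) · 𝟙_{⋂_{i ∈ X} L_i}(w) of R equals 1 if the number of indices i with w ∈ L_i is odd, and equals 0 if that number is even. (Here 𝟙 denotes the characteristic series over R, and (−2)^(|X|−1) is computed in R.) -/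
open Matrix

section Aux

variable {R : Type} [Ring R] {β : Type} [DecidableEq β]

lemma aux1 (r : R) (T : Finset β) : ∑ X ∈ T.powerset, r ^ X.card = (1 + r) ^ T.card := by
  induction T using Finset.induction_on with
  | empty => simp [Finset.filter_singleton]
  | insert _ _ ha ih =>
    rename_i a T
    rw [Finset.sum_powerset_insert ha, Finset.card_insert_of_notMem ha, pow_succ, ← ih]
    have : ∀ X ∈ T.powerset, r ^ (insert a X).card = r ^ X.card * r := by
      intro X hX
      rw [Finset.card_insert_of_notMem (fun h => ha (Finset.mem_powerset.1 hX h)), pow_succ]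
    rw [Finset.sum_congr rfl this, ← Finset.sum_mul, mul_one_add]

lemma aux2 (T : Finset β) :
    ∑ X ∈ T.powerset.filter (fun X => X ≠ ∅), (-2 : R) ^ (X.card - 1) =
      if Odd T.card then 1 else 0 := by
  induction T using Finset.induction_on with
  | empty =>
    rw [Finset.powerset_empty, Finset.filter_singleton]
    simp
  | insert _ _ ha ih =>
    rename_i a T
    rw [Finset.sum_filter] at *
    rw [Finset.sum_powerset_insert ha, ih, Finset.card_insert_of_notMem ha]
    have : ∀ X ∈ T.powerset,
        (if insert a X ≠ ∅ then (-2 : R) ^ ((insert a X).card - 1) else 0) = (-2) ^ X.card := by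
      intro X hX
      rw [if_pos (Finset.insert_ne_empty a X),
        Finset.card_insert_of_notMem (fun h => ha (Finset.mem_powerset.1 hX h))]
      simp
    rw [Finset.sum_congr rfl this, aux1]
    norm_num
    rcases Nat.even_or_odd T.card with h | h
    · simp [Nat.not_odd_iff_even.2 h, h.neg_one_pow, Nat.odd_add_one, h]
    · simp [h, h.neg_one_pow, Nat.odd_add_one, Nat.not_even_iff_odd.2 h]

end Aux

open RevWA in
open Classical in
theorem stmt13 (R : Type) [Ring R] (α : Type) [Fintype α] [Nonempty α]
    (n : ℕ) (L : Fin n → Set (List α)) (w : List α) :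
    ∑ X ∈ Finset.univ.filter (fun X : Finset (Fin n) => X ≠ ∅),
        (-2 : R) ^ (X.card - 1) * charSeries R (⋂ i ∈ X, L i) w =
      if Odd (Finset.univ.filter (fun i : Fin n => w ∈ L i)).card then (1 : R)
      else 0 := by
  classical
  set T := Finset.univ.filter (fun i : Fin n => w ∈ L i) with hT
  have hmemT : ∀ i : Fin n, i ∈ T ↔ w ∈ L i := by
    intro i; simp [hT]
  rw [← aux2 (R := R) T, Finset.sum_filter, Finset.sum_filter,
    ← Finset.sum_subset (Finset.subset_univ T.powerset)]
  · apply Finset.sum_congr rfl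
    intro X hX
    rw [Finset.mem_powerset] at hX
    by_cases hE : X = ∅
    · simp [hE]
    · rw [if_pos hE, if_pos hE]
      have hw : w ∈ ⋂ i ∈ X, L i := by
        rw [Set.mem_iInter₂]
        intro i hi
        exact (hmemT i).1 (hX hi)
      rw [charSeries, Set.indicator_of_mem hw, Pi.one_apply, mul_one]
  · intro X _ hX
    rw [Finset.mem_powerset] at hX
    have hE : X ≠ ∅ := by
      intro h; exact hX (by simp [h])
    rw [if_pos hE]
    have hw : w ∉ ⋂ i ∈ X, L i := by
      rw [Set.mem_iInter₂]
      intro h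
      exact hX (fun i hi => (hmemT i).2 (h i hi))
    rw [charSeries, Set.indicator_of_notMem hw, mul_zero]
end
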